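/- arXiv:2412.05008 — 5 statements merged into one kernel-verified Lean document; each statement's English description precedes it below -/
import Mathlib

section
/- Let A be a unital C*-algebra, H a complex Hilbert space, P ∈ B(H) positive and invertible, and Φ ∈ CP^{(P)}(A,B(H)). Then the following are equivalent: (i) Φ is a P-C*-extreme point of CP^{(P)}(A,B(H)); (ii) the unital CP map Φ̂(a) = P^{-1/2} Φ(a) P^{-1/2} is a C*-extreme point of UCP(A,B(H)); (iii) Φ = Ad_T∘Ψ for some C*-extreme point Ψ of UCP(A,B(H)) and some invertible T ∈ B(H) with T* T = P; (iv) for every CP map Ψ : A → B(H) with Ψ ≤_cp Φ and Ψ(1) invertible, there exists an invertible Z ∈ B(H) with Ψ = Ad_Z∘Φ. -/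
open scoped ComplexOrder

noncomputable section

section Defs

variable {A H : Type*}
variable [NormedAddCommGroup H] [InnerProductSpace ℂ H]

/-- An operator on a complex inner product space is positive:
`0 ≤ ⟪x, T x⟫` for all `x`. -/
def IsPosOp (T : H →L[ℂ] H) : Prop := ∀ x : H, 0 ≤ (inner ℂ x (T x) : ℂ)

variable [Ring A] [StarRing A] [Algebra ℂ A]

/-- Complete positivity of a linear map `Φ : A → B(H)`:
`∑_{i,j} ⟪h i, Φ(a i* a j) (h j)⟫ ≥ 0` for all finite families. -/
def IsCPMap (Φ : A →ₗ[ℂ] (H →L[ℂ] H)) : Prop :=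
  ∀ (n : ℕ) (a : Fin n → A) (h : Fin n → H),
    0 ≤ ∑ i, ∑ j, (inner ℂ (h i) ((Φ (star (a i) * a j)) (h j)) : ℂ)

/-- `CP^{(P)}(A, B(H))`: the CP maps `Φ` with `Φ 1 = P`. -/
def CPP (P : H →L[ℂ] H) : Set (A →ₗ[ℂ] (H →L[ℂ] H)) := {Φ | IsCPMap Φ ∧ Φ 1 = P}

/-- `CCP(A, B(H))`: the contractive CP maps, i.e. CP maps with `Φ 1 ≤ 1`. -/
def CCPmaps : Set (A →ₗ[ℂ] (H →L[ℂ] H)) := {Φ | IsCPMap Φ ∧ IsPosOp (1 - Φ 1)}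

variable [CompleteSpace H]

/-- `Ad_T : X ↦ T* X T`, as a linear map on `B(H)`. -/
def conjAd (T : H →L[ℂ] H) : (H →L[ℂ] H) →ₗ[ℂ] (H →L[ℂ] H) where
  toFun X := star T * X * T
  map_add' X Y := by simp [add_mul, mul_add]
  map_smul' c X := by simp [mul_smul_comm, smul_mul_assoc]

/-- `Φ ∈ CP^{(P)}` is a `P`-`C*`-extreme point of `CP^{(P)}(A, B(H))`:
whenever `Φ = ∑ Ad_{T j} ∘ Φs j` is a proper `P`-`C*`-convex combination of members of
`CP^{(P)}`, each `Φs j` equals `Ad_{S j} ∘ Φ` for some invertible `S j`. -/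
def IsPCExtreme (P : H →L[ℂ] H) (Φ : A →ₗ[ℂ] (H →L[ℂ] H)) : Prop :=
  Φ ∈ CPP (A := A) P ∧
  ∀ (n : ℕ) (T : Fin n → (H →L[ℂ] H)) (Φs : Fin n → (A →ₗ[ℂ] (H →L[ℂ] H))),
    (∀ j, IsUnit (T j)) → (∀ j, Φs j ∈ CPP (A := A) P) →
    (∑ j, star (T j) * P * T j) = P →
    Φ = ∑ j, (conjAd (T j)).comp (Φs j) →
    ∀ j, ∃ S : H →L[ℂ] H, IsUnit S ∧ Φs j = (conjAd S).comp Φ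

/-- `Φ ∈ C` is a `C*`-extreme point of the `C*`-convex set `C`:
whenever `Φ = ∑ Ad_{T j} ∘ Φs j` is a proper `C*`-convex combination of members of `C`,
each `Φs j` is unitarily equivalent to `Φ`. -/
def IsCstarExtreme (C : Set (A →ₗ[ℂ] (H →L[ℂ] H))) (Φ : A →ₗ[ℂ] (H →L[ℂ] H)) : Prop :=
  Φ ∈ C ∧
  ∀ (n : ℕ) (T : Fin n → (H →L[ℂ] H)) (Φs : Fin n → (A →ₗ[ℂ] (H →L[ℂ] H))),
    (∀ j, IsUnit (T j)) → (∀ j, Φs j ∈ C) →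
    (∑ j, star (T j) * T j) = 1 →
    Φ = ∑ j, (conjAd (T j)).comp (Φs j) →
    ∀ j, ∃ U : H →L[ℂ] H, U ∈ unitary (H →L[ℂ] H) ∧ Φs j = (conjAd U).comp Φ

/-- `Φ ∈ C` is a linear extreme point of the convex set `C`. -/
def IsLinExtreme (C : Set (A →ₗ[ℂ] (H →L[ℂ] H))) (Φ : A →ₗ[ℂ] (H →L[ℂ] H)) : Prop :=
  Φ ∈ C ∧
  ∀ (n : ℕ) (t : Fin n → ℝ) (Φs : Fin n → (A →ₗ[ℂ] (H →L[ℂ] H))),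
    (∀ j, 0 < t j ∧ t j < 1) → (∀ j, Φs j ∈ C) → (∑ j, t j) = 1 →
    Φ = ∑ j, (t j : ℂ) • Φs j →
    ∀ j, Φs j = Φ

end Defs

section InvConj

variable {A H : Type*} [NormedAddCommGroup H] [InnerProductSpace ℂ H]
variable [Ring A] [StarRing A] [Algebra ℂ A]

/-- The map `a ↦ R⁻¹ Φ(a) R⁻¹`; for `R = P^{1/2}` with `P = Φ(1)` invertible this is the
unital CP map `Φ̂(a) = P^{-1/2} Φ(a) P^{-1/2}`. -/
def invConj (R : H →L[ℂ] H) (Φ : A →ₗ[ℂ] (H →L[ℂ] H)) : A →ₗ[ℂ] (H →L[ℂ] H) where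
  toFun a := Ring.inverse R * Φ a * Ring.inverse R
  map_add' a b := by simp [mul_add, add_mul]
  map_smul' c a := by simp [mul_smul_comm, smul_mul_assoc]

end InvConj


section Helper

variable {A H : Type*} [NormedAddCommGroup H] [InnerProductSpace ℂ H]
variable [Ring A] [StarRing A] [Algebra ℂ A] [CompleteSpace H]

private lemma cancel_mid {M : Type*} [Monoid M] {a b : M} (h : a * b = 1) (x : M) :
    a * (b * x) = x := by rw [← mul_assoc, h, one_mul]

private lemma conjAd_apply (T X : H →L[ℂ] H) : conjAd T X = star T * X * T := rfl

omit [Ring A] [StarRing A] [Algebra ℂ A] [CompleteSpace H] in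
private lemma isPosOp_nonneg {T : H →L[ℂ] H} [CompleteSpace H] (h : IsPosOp T) : 0 ≤ T := by
  rw [ContinuousLinearMap.nonneg_iff_isPositive, ContinuousLinearMap.isPositive_iff_complex]
  intro x
  have hx := h x
  rw [Complex.le_def] at hx
  obtain ⟨hre, him⟩ := hx
  simp only [Complex.zero_re, Complex.zero_im] at hre him
  have hTz : (inner ℂ (T x) x : ℂ) = inner ℂ x (T x) := by
    rw [← inner_conj_symm]
    exact Complex.conj_eq_iff_im.mpr him.symm
  constructor
  · rw [hTz]
    apply Complex.ext <;> simp [← him]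
  · rw [hTz]
    simpa using hre

private lemma isCPMap_conjAd {Φ : A →ₗ[ℂ] (H →L[ℂ] H)} (hΦ : IsCPMap Φ) (T : H →L[ℂ] H) :
    IsCPMap ((conjAd T).comp Φ) := by
  intro n a h
  have key : ∀ i j : Fin n, (inner ℂ (h i) ((((conjAd T).comp Φ) (star (a i) * a j)) (h j)) : ℂ)
      = inner ℂ (T (h i)) ((Φ (star (a i) * a j)) (T (h j))) := by
    intro i j
    simp only [LinearMap.comp_apply, conjAd_apply, ContinuousLinearMap.mul_apply,
      ContinuousLinearMap.star_eq_adjoint, ContinuousLinearMap.adjoint_inner_right]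
  simp_rw [key]
  exact hΦ n a fun i => T (h i)

omit [CompleteSpace H] in
private lemma isCPMap_add {Φ Ψ : A →ₗ[ℂ] (H →L[ℂ] H)} (hΦ : IsCPMap Φ) (hΨ : IsCPMap Ψ) :
    IsCPMap (Φ + Ψ) := by
  intro n a h
  simp only [LinearMap.add_apply, ContinuousLinearMap.add_apply, inner_add_right,
    Finset.sum_add_distrib]
  exact add_nonneg (hΦ n a h) (hΨ n a h)

omit [CompleteSpace H] in
private lemma isCPMap_smul {Φ : A →ₗ[ℂ] (H →L[ℂ] H)} (hΦ : IsCPMap Φ) {r : ℝ} (hr : 0 ≤ r) :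
    IsCPMap (((r : ℂ)) • Φ) := by
  intro n a h
  simp only [LinearMap.smul_apply, ContinuousLinearMap.coe_smul', Pi.smul_apply,
    inner_smul_right]
  simp_rw [← Finset.mul_sum]
  exact mul_nonneg (by exact_mod_cast hr) (hΦ n a h)

omit [CompleteSpace H] in
private lemma isCPMap_sum {ι : Type*} (s : Finset ι) (F : ι → (A →ₗ[ℂ] (H →L[ℂ] H)))
    (hF : ∀ k ∈ s, IsCPMap (F k)) : IsCPMap (∑ k ∈ s, F k) := by
  intro n a h
  have key : ∑ i, ∑ j, (inner ℂ (h i) (((∑ k ∈ s, F k) (star (a i) * a j)) (h j)) : ℂ)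
      = ∑ k ∈ s, ∑ i, ∑ j, (inner ℂ (h i) (((F k) (star (a i) * a j)) (h j)) : ℂ) := by
    have e1 : ∀ (x : A) (v : H), ((∑ k ∈ s, F k) x) v = ∑ k ∈ s, (F k x) v := by
      intro x v
      rw [LinearMap.sum_apply, ContinuousLinearMap.sum_apply]
    simp_rw [e1, inner_sum]
    refine Eq.trans (Finset.sum_congr rfl fun i _ => ?_) Finset.sum_comm
    exact Finset.sum_comm
  rw [key]
  exact Finset.sum_nonneg fun k hk => hF k hk n a h

private lemma isCPMap_one_nonneg {Φ : A →ₗ[ℂ] (H →L[ℂ] H)} (hΦ : IsCPMap Φ) : 0 ≤ Φ 1 := by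
  apply isPosOp_nonneg
  intro x
  have h0 := hΦ 1 (fun _ => 1) (fun _ => x)
  simpa using h0

private lemma isUnit_of_mul_self_unit {M : Type*} [Monoid M] {b q : M} (h : b * b = q)
    (hq : IsUnit q) : IsUnit b := by
  obtain ⟨u, hu⟩ := hq
  have hbc : b * (b * (↑u⁻¹ : M)) = 1 := by rw [← mul_assoc, h, ← hu, u.mul_inv]
  have hdb : ((↑u⁻¹ : M) * b) * b = 1 := by rw [mul_assoc, h, ← hu, u.inv_mul]
  have hcd : (b * (↑u⁻¹ : M)) = (↑u⁻¹ : M) * b := by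
    conv_lhs => rw [← one_mul (b * (↑u⁻¹ : M)), ← hdb]
    rw [mul_assoc, hbc, mul_one]
  exact ⟨⟨b, b * (↑u⁻¹ : M), hbc, by rw [hcd]; exact hdb⟩, rfl⟩

omit [Ring A] [StarRing A] [Algebra ℂ A] in
private lemma star_ringInverse {B : H →L[ℂ] H} (hsa : star B = B) (hB : IsUnit B) :
    star (Ring.inverse B) = Ring.inverse B := by
  have h1 : star (Ring.inverse B) * B = 1 := by
    conv_lhs => rw [← hsa, ← star_mul]
    rw [hsa, Ring.mul_inverse_cancel B hB, star_one]
  calc star (Ring.inverse B) = star (Ring.inverse B) * (B * Ring.inverse B) := by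
        rw [Ring.mul_inverse_cancel B hB, mul_one]
    _ = (star (Ring.inverse B) * B) * Ring.inverse B := by rw [mul_assoc]
    _ = Ring.inverse B := by rw [h1, one_mul]

omit [Ring A] [StarRing A] [Algebra ℂ A] in
private lemma mem_unitary_of_isUnit {V : H →L[ℂ] H} (hV : IsUnit V) (h : star V * V = 1) :
    V ∈ unitary (H →L[ℂ] H) := by
  have h2 : star V = Ring.inverse V := by
    calc star V = star V * (V * Ring.inverse V) := by
          rw [Ring.mul_inverse_cancel V hV, mul_one]
      _ = (star V * V) * Ring.inverse V := by rw [mul_assoc]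
      _ = Ring.inverse V := by rw [h, one_mul]
  exact Unitary.mem_iff.mpr ⟨h, by rw [h2, Ring.mul_inverse_cancel V hV]⟩

omit [Ring A] [StarRing A] [Algebra ℂ A] [CompleteSpace H] in
private lemma isUnit_smul_clm {c : ℂ} (hc : c ≠ 0) {W : H →L[ℂ] H} (hW : IsUnit W) :
    IsUnit (c • W) := by
  have h1 : c • W = (c • (1 : H →L[ℂ] H)) * W := by rw [smul_mul_assoc, one_mul]
  have h2 : IsUnit (c • (1 : H →L[ℂ] H)) := by
    refine ⟨⟨c • 1, c⁻¹ • 1, ?_, ?_⟩, rfl⟩ <;>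
      simp [smul_smul, mul_inv_cancel₀ hc, inv_mul_cancel₀ hc]
  rw [h1]; exact h2.mul hW

set_option maxHeartbeats 1000000 in
private lemma imp12 (P R : H →L[ℂ] H) (Φ : A →ₗ[ℂ] (H →L[ℂ] H))
    (hRsa : star R = R) (hRR : R * R = P) (hRu : IsUnit R)
    (hΦcp : IsCPMap Φ) (hΦ1 : Φ 1 = P) (hext : IsPCExtreme P Φ) :
    IsCstarExtreme (CPP (A := A) (1 : H →L[ℂ] H)) (invConj R Φ) := by
  have hRiR : Ring.inverse R * R = 1 := Ring.inverse_mul_cancel R hRu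
  have hRRi : R * Ring.inverse R = 1 := Ring.mul_inverse_cancel R hRu
  have hRisa : star (Ring.inverse R) = Ring.inverse R := star_ringInverse hRsa hRu
  have hRiu : IsUnit (Ring.inverse R) := isUnit_ringInverse.mpr hRu
  set Ri := Ring.inverse R with hRidef
  have hΦh_pt : ∀ a : A, (invConj R Φ) a = Ri * Φ a * Ri := fun a => rfl
  have hΦ_pt : ∀ a : A, Φ a = R * ((invConj R Φ) a * R) := by
    intro a
    rw [hΦh_pt]
    simp only [mul_assoc, cancel_mid hRRi, hRiR, mul_one]
  have hinvcp : IsCPMap (invConj R Φ) := by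
    have he : invConj R Φ = (conjAd Ri).comp Φ := by
      refine LinearMap.ext fun a => ?_
      show Ri * Φ a * Ri = star Ri * Φ a * Ri
      rw [hRisa]
    rw [he]; exact isCPMap_conjAd hΦcp Ri
  have hΦh1 : (invConj R Φ) 1 = 1 := by
    rw [hΦh_pt, hΦ1, ← hRR]
    simp only [mul_assoc, cancel_mid hRiR, hRRi, mul_one]
  refine ⟨⟨hinvcp, hΦh1⟩, ?_⟩
  intro n T' Φs hT'u hmem hsum heq j
  have hpt : ∀ a : A, (invConj R Φ) a = ∑ k, star (T' k) * ((Φs k) a) * T' k := by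
    intro a
    have h0 := LinearMap.congr_fun heq a
    rw [h0, LinearMap.sum_apply]
    exact Finset.sum_congr rfl fun k _ => rfl
  have hT''u : ∀ k, IsUnit (Ri * T' k * R) := fun k => (hRiu.mul (hT'u k)).mul hRu
  have hmem' : ∀ k, (conjAd R).comp (Φs k) ∈ CPP (A := A) P := by
    intro k
    refine ⟨isCPMap_conjAd (hmem k).1 R, ?_⟩
    show star R * (Φs k) 1 * R = P
    rw [(hmem k).2, hRsa, mul_one, hRR]
  have hsum' : (∑ k, star (Ri * T' k * R) * P * (Ri * T' k * R)) = P := by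
    have hterm : ∀ k, star (Ri * T' k * R) * P * (Ri * T' k * R)
        = R * ((star (T' k) * T' k) * R) := by
      intro k
      simp only [star_mul, hRsa, hRisa, ← hRR, mul_assoc, cancel_mid hRiR, cancel_mid hRRi]
    rw [Finset.sum_congr rfl fun k _ => hterm k, ← Finset.mul_sum, ← Finset.sum_mul, hsum,
      one_mul, hRR]
  have heqP : Φ = ∑ k, (conjAd (Ri * T' k * R)).comp ((conjAd R).comp (Φs k)) := by
    refine LinearMap.ext fun a => ?_
    rw [LinearMap.sum_apply]
    calc Φ a = R * ((invConj R Φ) a * R) := hΦ_pt a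
      _ = R * ((∑ k, star (T' k) * ((Φs k) a) * T' k) * R) := by rw [← hpt]
      _ = ∑ k, R * ((star (T' k) * ((Φs k) a) * T' k) * R) := by
          rw [Finset.sum_mul, Finset.mul_sum]
      _ = ∑ k, ((conjAd (Ri * T' k * R)).comp ((conjAd R).comp (Φs k))) a :=
          Finset.sum_congr rfl fun k _ => by
            show _ = star (Ri * T' k * R) * (star R * (Φs k) a * R) * (Ri * T' k * R)
            simp only [star_mul, hRsa, hRisa, mul_assoc, cancel_mid hRiR, cancel_mid hRRi]
  obtain ⟨S, hSu, hS⟩ := hext.2 n (fun k => Ri * T' k * R) (fun k => (conjAd R).comp (Φs k))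
    hT''u hmem' hsum' heqP j
  have hSa : ∀ a : A, star R * ((Φs j) a) * R = star S * Φ a * S := fun a =>
    LinearMap.congr_fun hS a
  have hVu : IsUnit (R * (S * Ri)) := hRu.mul (hSu.mul hRiu)
  have hΦsj : Φs j = (conjAd (R * (S * Ri))).comp (invConj R Φ) := by
    refine LinearMap.ext fun a => ?_
    show (Φs j) a = star (R * (S * Ri)) * ((invConj R Φ) a) * (R * (S * Ri))
    rw [hΦh_pt]
    calc (Φs j) a = Ri * (star R * ((Φs j) a) * R) * Ri := by
          rw [hRsa]
          simp only [mul_assoc, cancel_mid hRiR, hRRi, mul_one]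
      _ = Ri * (star S * Φ a * S) * Ri := by rw [hSa]
      _ = star (R * (S * Ri)) * (Ri * Φ a * Ri) * (R * (S * Ri)) := by
          simp only [star_mul, hRsa, hRisa, mul_assoc, cancel_mid hRiR, cancel_mid hRRi]
  have hV1 : star (R * (S * Ri)) * (R * (S * Ri)) = 1 := by
    have h1 := LinearMap.congr_fun hΦsj 1
    rw [(hmem j).2] at h1
    rw [show ((conjAd (R * (S * Ri))).comp (invConj R Φ)) 1
        = star (R * (S * Ri)) * ((invConj R Φ) 1) * (R * (S * Ri)) from rfl, hΦh1, mul_one] at h1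
    exact h1.symm
  exact ⟨R * (S * Ri), mem_unitary_of_isUnit hVu hV1, hΦsj⟩

private lemma imp23 (P R : H →L[ℂ] H) (Φ : A →ₗ[ℂ] (H →L[ℂ] H))
    (hRsa : star R = R) (hRR : R * R = P) (hRu : IsUnit R)
    (hext : IsCstarExtreme (CPP (A := A) (1 : H →L[ℂ] H)) (invConj R Φ)) :
    ∃ (Ψ : A →ₗ[ℂ] (H →L[ℂ] H)) (T : H →L[ℂ] H),
      IsCstarExtreme (CPP (A := A) (1 : H →L[ℂ] H)) Ψ ∧ IsUnit T ∧
      star T * T = P ∧ Φ = (conjAd T).comp Ψ := by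
  have hRiR : Ring.inverse R * R = 1 := Ring.inverse_mul_cancel R hRu
  have hRRi : R * Ring.inverse R = 1 := Ring.mul_inverse_cancel R hRu
  refine ⟨invConj R Φ, R, hext, hRu, by rw [hRsa, hRR], ?_⟩
  refine LinearMap.ext fun a => ?_
  show Φ a = star R * (Ring.inverse R * Φ a * Ring.inverse R) * R
  rw [hRsa]
  simp only [mul_assoc, cancel_mid hRRi, hRiR, mul_one]

set_option maxHeartbeats 1000000 in
set_option synthInstance.maxHeartbeats 1000000 in
private lemma imp34 (P : H →L[ℂ] H) (Φ : A →ₗ[ℂ] (H →L[ℂ] H)) (hΦcp : IsCPMap Φ)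
    (hΦ1 : Φ 1 = P)
    (hex : ∃ (Ψ : A →ₗ[ℂ] (H →L[ℂ] H)) (T : H →L[ℂ] H),
      IsCstarExtreme (CPP (A := A) (1 : H →L[ℂ] H)) Ψ ∧ IsUnit T ∧
      star T * T = P ∧ Φ = (conjAd T).comp Ψ) :
    ∀ Θ : A →ₗ[ℂ] (H →L[ℂ] H), IsCPMap Θ → IsCPMap (Φ - Θ) → IsUnit (Θ 1) →
      ∃ Z : H →L[ℂ] H, IsUnit Z ∧ Θ = (conjAd Z).comp Φ := by
  obtain ⟨Ψ, T, hΨext, hTu, hTT, hΦT⟩ := hex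
  intro Θ hΘcp hdiff hΘ1u
  have hTiT : Ring.inverse T * T = 1 := Ring.inverse_mul_cancel T hTu
  have hTTi : T * Ring.inverse T = 1 := Ring.mul_inverse_cancel T hTu
  have hTiu : IsUnit (Ring.inverse T) := isUnit_ringInverse.mpr hTu
  set Ti := Ring.inverse T with hTidef
  have hΨpt : ∀ a : A, Ψ a = star Ti * (Φ a) * Ti := by
    intro a
    have h0 := LinearMap.congr_fun hΦT a
    rw [show ((conjAd T).comp Ψ) a = star T * Ψ a * T from rfl] at h0
    rw [h0]
    calc Ψ a = star (T * Ti) * Ψ a * (T * Ti) := by rw [hTTi, star_one, one_mul, mul_one]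
      _ = star Ti * (star T * Ψ a * T) * Ti := by simp only [star_mul, mul_assoc]
  -- halving
  set Θ' : A →ₗ[ℂ] (H →L[ℂ] H) := (((2:ℝ)⁻¹ : ℝ) : ℂ) • Θ with hΘ'def
  have hΘ'cp : IsCPMap Θ' := isCPMap_smul hΘcp (by norm_num)
  have hΘsum : Θ' + Θ' = Θ := by
    rw [hΘ'def, ← add_smul]
    norm_num
  set Q := Θ' 1 with hQdef
  have hQpos : (0 : H →L[ℂ] H) ≤ Q := isCPMap_one_nonneg hΘ'cp
  have hQu : IsUnit Q := by
    rw [hQdef, hΘ'def]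
    rw [LinearMap.smul_apply]
    exact isUnit_smul_clm (by norm_num) hΘ1u
  set Δ := Φ - Θ' with hΔdef
  have hΔcp : IsCPMap Δ := by
    have hΔeq : Δ = (Φ - Θ) + Θ' := by rw [hΔdef, ← hΘsum]; abel
    rw [hΔeq]; exact isCPMap_add hdiff hΘ'cp
  set D := Δ 1 with hDdef
  have hDpos : (0 : H →L[ℂ] H) ≤ D := isCPMap_one_nonneg hΔcp
  have hQD : Q + D = P := by
    rw [hQdef, hDdef, hΔdef, LinearMap.sub_apply, hΦ1]
    abel
  have hQle : Q ≤ D := by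
    have h0 : (0 : H →L[ℂ] H) ≤ (Φ - Θ) 1 := isCPMap_one_nonneg hdiff
    have hDQ : D - Q = (Φ - Θ) 1 := by
      rw [hDdef, hΔdef, hQdef, ← hΘsum]
      simp only [LinearMap.sub_apply, LinearMap.add_apply]
      abel
    exact sub_nonneg.mp (hDQ ▸ h0)
  have hDu : IsUnit D := CStarAlgebra.isUnit_of_le Q hQle (hQu.isStrictlyPositive hQpos)
  -- square roots
  set B := CFC.sqrt Q with hBdef
  have hB2 : B * B = Q := CFC.sqrt_mul_sqrt_self Q hQpos
  have hBpos : (0 : H →L[ℂ] H) ≤ B := CFC.sqrt_nonneg Q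
  have hBsa : star B = B := (IsSelfAdjoint.of_nonneg hBpos).star_eq
  have hBu : IsUnit B := isUnit_of_mul_self_unit hB2 hQu
  have hBiB : Ring.inverse B * B = 1 := Ring.inverse_mul_cancel B hBu
  have hBBi : B * Ring.inverse B = 1 := Ring.mul_inverse_cancel B hBu
  have hBisa : star (Ring.inverse B) = Ring.inverse B := star_ringInverse hBsa hBu
  set Bi := Ring.inverse B with hBidef
  set C := CFC.sqrt D with hCdef
  have hC2 : C * C = D := CFC.sqrt_mul_sqrt_self D hDpos
  have hCpos : (0 : H →L[ℂ] H) ≤ C := CFC.sqrt_nonneg D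
  have hCsa : star C = C := (IsSelfAdjoint.of_nonneg hCpos).star_eq
  have hCu : IsUnit C := isUnit_of_mul_self_unit hC2 hDu
  have hCiC : Ring.inverse C * C = 1 := Ring.inverse_mul_cancel C hCu
  have hCCi : C * Ring.inverse C = 1 := Ring.mul_inverse_cancel C hCu
  have hCisa : star (Ring.inverse C) = Ring.inverse C := star_ringInverse hCsa hCu
  set Ci := Ring.inverse C with hCidef
  -- unital pieces
  set Ψ1 := (conjAd Bi).comp Θ' with hΨ1def
  set Ψ2 := (conjAd Ci).comp Δ with hΨ2def
  have hΨ1mem : Ψ1 ∈ CPP (A := A) (1 : H →L[ℂ] H) := by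
    refine ⟨isCPMap_conjAd hΘ'cp Bi, ?_⟩
    show star Bi * Θ' 1 * Bi = 1
    rw [← hQdef, hBisa, ← hB2]
    simp only [mul_assoc, cancel_mid hBiB, hBBi, mul_one]
  have hΨ2mem : Ψ2 ∈ CPP (A := A) (1 : H →L[ℂ] H) := by
    refine ⟨isCPMap_conjAd hΔcp Ci, ?_⟩
    show star Ci * Δ 1 * Ci = 1
    rw [← hDdef, hCisa, ← hC2]
    simp only [mul_assoc, cancel_mid hCiC, hCCi, mul_one]
  -- coefficients
  set W1 := B * Ti with hW1def
  set W2 := C * Ti with hW2def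
  have hW1u : IsUnit W1 := hBu.mul hTiu
  have hW2u : IsUnit W2 := hCu.mul hTiu
  have hWu : ∀ j : Fin 2, IsUnit (![W1, W2] j) := by
    intro j; fin_cases j
    · exact hW1u
    · exact hW2u
  have hmemW : ∀ j : Fin 2, ![Ψ1, Ψ2] j ∈ CPP (A := A) (1 : H →L[ℂ] H) := by
    intro j; fin_cases j
    · exact hΨ1mem
    · exact hΨ2mem
  have hsumW : (∑ j : Fin 2, star (![W1, W2] j) * ![W1, W2] j) = 1 := by
    rw [Fin.sum_univ_two]
    show star W1 * W1 + star W2 * W2 = 1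
    have f1 : star W1 * W1 = star Ti * (Q * Ti) := by
      rw [hW1def, star_mul, hBsa, ← hB2]
      simp only [mul_assoc]
    have f2 : star W2 * W2 = star Ti * (D * Ti) := by
      rw [hW2def, star_mul, hCsa, ← hC2]
      simp only [mul_assoc]
    rw [f1, f2, ← mul_add, ← add_mul, hQD, ← hTT, mul_assoc (star T) T Ti, hTTi, mul_one,
      ← star_mul, hTTi, star_one]
  have hdecomp : Ψ = ∑ j : Fin 2, (conjAd (![W1, W2] j)).comp (![Ψ1, Ψ2] j) := by
    refine LinearMap.ext fun a => ?_
    rw [LinearMap.sum_apply, Fin.sum_univ_two]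
    have e1 : ((conjAd (![W1, W2] 0)).comp (![Ψ1, Ψ2] 0)) a = star Ti * (Θ' a * Ti) := by
      show star W1 * (star Bi * Θ' a * Bi) * W1 = star Ti * (Θ' a * Ti)
      rw [hW1def, star_mul, hBsa, hBisa]
      simp only [mul_assoc, cancel_mid hBiB, cancel_mid hBBi]
    have e2 : ((conjAd (![W1, W2] 1)).comp (![Ψ1, Ψ2] 1)) a = star Ti * (Δ a * Ti) := by
      show star W2 * (star Ci * Δ a * Ci) * W2 = star Ti * (Δ a * Ti)
      rw [hW2def, star_mul, hCsa, hCisa]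
      simp only [mul_assoc, cancel_mid hCiC, cancel_mid hCCi]
    rw [e1, e2]
    have hsum_a : Θ' a + Δ a = Φ a := by
      rw [hΔdef, LinearMap.sub_apply]; abel
    calc Ψ a = star Ti * (Φ a * Ti) := by rw [hΨpt, mul_assoc]
      _ = star Ti * ((Θ' a + Δ a) * Ti) := by rw [hsum_a]
      _ = star Ti * (Θ' a * Ti) + star Ti * (Δ a * Ti) := by
          rw [add_mul, mul_add]
  obtain ⟨U, hUmem, hU⟩ := hΨext.2 2 ![W1, W2] ![Ψ1, Ψ2] hWu hmemW hsumW hdecomp 0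
  have hUu : IsUnit U :=
    ⟨⟨U, star U, (Unitary.mem_iff.mp hUmem).2, (Unitary.mem_iff.mp hUmem).1⟩, rfl⟩
  have hU' : Ψ1 = (conjAd U).comp Ψ := hU
  have hΨ1a : ∀ a : A, Ψ1 a = star U * (Ψ a) * U := fun a => LinearMap.congr_fun hU' a
  -- assemble Z
  refine ⟨((Real.sqrt 2 : ℝ) : ℂ) • (Ti * (U * B)),
    isUnit_smul_clm (by positivity) (hTiu.mul (hUu.mul hBu)), ?_⟩
  refine LinearMap.ext fun a => ?_
  show Θ a = star (((Real.sqrt 2 : ℝ) : ℂ) • (Ti * (U * B))) * Φ a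
      * (((Real.sqrt 2 : ℝ) : ℂ) • (Ti * (U * B)))
  have hΘ'a : Θ' a = star (Ti * (U * B)) * (Φ a) * (Ti * (U * B)) := by
    calc Θ' a = B * (Ψ1 a) * B := by
          rw [hΨ1def]
          show Θ' a = B * (star Bi * Θ' a * Bi) * B
          rw [hBisa]
          simp only [mul_assoc, cancel_mid hBBi, hBiB, mul_one]
      _ = star (Ti * (U * B)) * (Φ a) * (Ti * (U * B)) := by
          rw [hΨ1a, hΨpt]
          simp only [star_mul, hBsa, mul_assoc]
  have hΘa : Θ a = Θ' a + Θ' a := by rw [← hΘsum, LinearMap.add_apply]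
  rw [hΘa, hΘ'a]
  simp only [star_smul, smul_mul_assoc, mul_smul_comm, smul_smul, Complex.star_def,
    Complex.conj_ofReal]
  rw [show ((Real.sqrt 2 : ℝ) : ℂ) * ((Real.sqrt 2 : ℝ) : ℂ) = (2 : ℂ) by
    rw [← Complex.ofReal_mul, Real.mul_self_sqrt (by norm_num)]; norm_num]
  rw [two_smul]

private lemma imp41 (P : H →L[ℂ] H) (Φ : A →ₗ[ℂ] (H →L[ℂ] H)) (hPinv : IsUnit P)
    (hΦcp : IsCPMap Φ) (hΦ1 : Φ 1 = P)
    (h4 : ∀ Ψ : A →ₗ[ℂ] (H →L[ℂ] H), IsCPMap Ψ → IsCPMap (Φ - Ψ) → IsUnit (Ψ 1) →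
      ∃ Z : H →L[ℂ] H, IsUnit Z ∧ Ψ = (conjAd Z).comp Φ) :
    IsPCExtreme P Φ := by
  refine ⟨⟨hΦcp, hΦ1⟩, ?_⟩
  intro n T' Φs hT'u hmem hsum heq j
  set Ψ := (conjAd (T' j)).comp (Φs j) with hΨdef
  have hΨcp : IsCPMap Ψ := isCPMap_conjAd (hmem j).1 (T' j)
  have hrest : IsCPMap (Φ - Ψ) := by
    have hr : Φ - Ψ = ∑ k ∈ Finset.univ.erase j, (conjAd (T' k)).comp (Φs k) := by
      rw [heq, hΨdef, ← Finset.sum_erase_add Finset.univ _ (Finset.mem_univ j)]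
      abel
    rw [hr]
    exact isCPMap_sum _ _ fun k _ => isCPMap_conjAd (hmem k).1 (T' k)
  have hΨ1u : IsUnit (Ψ 1) := by
    have hv : Ψ 1 = star (T' j) * P * T' j := by
      rw [hΨdef]
      show star (T' j) * (Φs j) 1 * T' j = star (T' j) * P * T' j
      rw [(hmem j).2]
    rw [hv]
    exact ((hT'u j).star.mul hPinv).mul (hT'u j)
  obtain ⟨Z, hZu, hZ⟩ := h4 Ψ hΨcp hrest hΨ1u
  have hZa : ∀ a : A, star (T' j) * ((Φs j) a) * T' j = star Z * Φ a * Z := fun a =>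
    LinearMap.congr_fun hZ a
  have h1 : T' j * Ring.inverse (T' j) = 1 := Ring.mul_inverse_cancel _ (hT'u j)
  refine ⟨Z * Ring.inverse (T' j), hZu.mul (isUnit_ringInverse.mpr (hT'u j)), ?_⟩
  refine LinearMap.ext fun a => ?_
  show (Φs j) a = star (Z * Ring.inverse (T' j)) * Φ a * (Z * Ring.inverse (T' j))
  calc (Φs j) a
      = star (Ring.inverse (T' j)) * (star (T' j) * ((Φs j) a) * T' j)
        * Ring.inverse (T' j) := by
        calc (Φs j) a = star (T' j * Ring.inverse (T' j)) * ((Φs j) a)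
              * (T' j * Ring.inverse (T' j)) := by rw [h1, star_one, one_mul, mul_one]
          _ = _ := by simp only [star_mul, mul_assoc]
    _ = star (Ring.inverse (T' j)) * (star Z * Φ a * Z) * Ring.inverse (T' j) := by rw [hZa]
    _ = star (Z * Ring.inverse (T' j)) * Φ a * (Z * Ring.inverse (T' j)) := by
        simp only [star_mul, mul_assoc]

end Helper

/-- Theorem `thm-P-Cext-char`. For `P` positive invertible and
`Φ ∈ CP^{(P)}`, with `R = P^{1/2}` the positive square root, the following are equivalent:
(i) `Φ` is a `P`-`C*`-extreme point; (ii) `Φ̂ = P^{-1/2} Φ(·) P^{-1/2}` is a `C*`-extreme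
point of `UCP(A,B(H)) = CP^{(1)}`; (iii) `Φ = Ad_T ∘ Ψ` for some `C*`-extreme `Ψ` of UCP and
invertible `T` with `T* T = P`; (iv) every CP map `Ψ ≤_cp Φ` with `Ψ(1)` invertible equals
`Ad_Z ∘ Φ` for some invertible `Z`. -/
theorem stmt10 {A : Type*} [NormedRing A] [StarRing A] [CStarRing A] [NormedAlgebra ℂ A] [StarModule ℂ A] [CompleteSpace A]
    {H : Type*} [NormedAddCommGroup H] [InnerProductSpace ℂ H] [CompleteSpace H]
    (P R : H →L[ℂ] H) (hP : IsPosOp P) (hPinv : IsUnit P)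
    (hR : IsPosOp R) (hRR : R * R = P)
    (Φ : A →ₗ[ℂ] (H →L[ℂ] H)) (hΦ : Φ ∈ CPP (A := A) P) :
    (IsPCExtreme P Φ ↔
      IsCstarExtreme (CPP (A := A) (1 : H →L[ℂ] H)) (invConj R Φ)) ∧
    (IsCstarExtreme (CPP (A := A) (1 : H →L[ℂ] H)) (invConj R Φ) ↔
      ∃ (Ψ : A →ₗ[ℂ] (H →L[ℂ] H)) (T : H →L[ℂ] H),
        IsCstarExtreme (CPP (A := A) (1 : H →L[ℂ] H)) Ψ ∧ IsUnit T ∧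
        star T * T = P ∧ Φ = (conjAd T).comp Ψ) ∧
    ((∃ (Ψ : A →ₗ[ℂ] (H →L[ℂ] H)) (T : H →L[ℂ] H),
        IsCstarExtreme (CPP (A := A) (1 : H →L[ℂ] H)) Ψ ∧ IsUnit T ∧
        star T * T = P ∧ Φ = (conjAd T).comp Ψ) ↔
      ∀ Ψ : A →ₗ[ℂ] (H →L[ℂ] H), IsCPMap Ψ → IsCPMap (Φ - Ψ) → IsUnit (Ψ 1) →
        ∃ Z : H →L[ℂ] H, IsUnit Z ∧ Ψ = (conjAd Z).comp Φ) := by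
  have hΦcp := hΦ.1
  have hΦ1 := hΦ.2
  have hRsa : star R = R := (IsSelfAdjoint.of_nonneg (isPosOp_nonneg hR)).star_eq
  have hRu : IsUnit R := isUnit_of_mul_self_unit hRR hPinv
  have h12 := fun h => imp12 P R Φ hRsa hRR hRu hΦcp hΦ1 h
  have h23 := fun h => imp23 P R Φ hRsa hRR hRu h
  have h34 := fun h => imp34 (A := A) P Φ hΦcp hΦ1 h
  have h41 := fun h => imp41 (A := A) P Φ hPinv hΦcp hΦ1 h
  exact ⟨⟨h12, fun h => h41 (h34 (h23 h))⟩,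
    ⟨h23, fun h => h12 (h41 (h34 h))⟩,
    ⟨h34, fun h => h23 (h12 (h41 h))⟩⟩

end
end

section
/- Let A be a unital C*-algebra and H a finite-dimensional complex Hilbert space. Then for every positive P ∈ B(H), every P-C*-extreme point of CP^{(P)}(A,B(H)) is a linear extreme point of CP^{(P)}(A,B(H)). -/
open scoped ComplexOrder

noncomputable section

set_option linter.unusedSectionVars false
set_option maxHeartbeats 1000000

section Aux1

lemma aux_mmul {R : Type*} [Semigroup R] {x y z : R} (h : x * y = z) (m : R) :
    x * (y * m) = z * m := by rw [← mul_assoc, h]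

lemma aux_scalar {c z z' : ℂ} (h : ∀ s : ℂ, 0 ≤ c + (starRingEnd ℂ) s * z + s * z') :
    z = 0 ∧ z' = 0 := by
  have him : ∀ s : ℂ, (c + (starRingEnd ℂ) s * z + s * z').im = 0 := by
    intro s
    have := h s
    rw [Complex.le_def] at this
    simpa using this.2.symm
  have hre : ∀ s : ℂ, 0 ≤ (c + (starRingEnd ℂ) s * z + s * z').re := by
    intro s
    have := h s
    rw [Complex.le_def] at this
    simpa using this.1
  have hc_im : c.im = 0 := by simpa using him 0
  have hc_re : 0 ≤ c.re := by simpa using hre 0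
  have h1 := him 1
  have hI := him Complex.I
  simp [Complex.add_im, Complex.mul_im, Complex.mul_re, hc_im, Complex.conj_re, Complex.conj_im,
    Complex.I_re, Complex.I_im] at h1 hI
  have hz' : z' = (starRingEnd ℂ) z := by
    apply Complex.ext
    · simp [Complex.conj_re]; linarith
    · simp [Complex.conj_im]; linarith
  have hz : z = 0 := by
    by_contra hz0
    have hnsq : 0 < Complex.normSq z := Complex.normSq_pos.mpr hz0
    set r : ℝ := (c.re + 1) / (2 * Complex.normSq z) with hr
    have hrpos : 0 < r := by positivity
    have this1 := hre (-(r : ℝ) * z)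
    rw [hz'] at this1
    have key : (starRingEnd ℂ) z * z = (Complex.normSq z : ℂ) := by
      rw [mul_comm, Complex.mul_conj]
    have hexp : (c + (starRingEnd ℂ) (-(r:ℝ) * z) * z + (-(r:ℝ) * z) * (starRingEnd ℂ) z)
        = c - 2 * (r:ℝ) * (Complex.normSq z : ℝ) := by
      rw [map_mul, map_neg, Complex.conj_ofReal]
      have key2 : z * (starRingEnd ℂ) z = (Complex.normSq z : ℂ) := Complex.mul_conj z
      linear_combination (-(r:ℂ)) * key + (-(r:ℂ)) * key2
    rw [hexp] at this1
    simp [Complex.sub_re, Complex.mul_re, Complex.ofReal_re, Complex.ofReal_im] at this1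
    have h2r : 2 * r * Complex.normSq z = c.re + 1 := by
      rw [hr]; field_simp
    nlinarith
  exact ⟨hz, by simp [hz', hz]⟩

end Aux1

section Aux2
variable {A H : Type*}
variable [NormedAddCommGroup H] [InnerProductSpace ℂ H]
variable [Ring A] [StarRing A] [Algebra ℂ A]

lemma aux_ker {Φ : A →ₗ[ℂ] (H →L[ℂ] H)} (hcp : IsCPMap Φ) {P : H →L[ℂ] H} (hP1 : Φ 1 = P)
    {v : H} (hv : P v = 0) (a : A) :
    (∀ w : H, (inner ℂ v ((Φ a) w) : ℂ) = 0) ∧ (Φ a) v = 0 := by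
  have main : ∀ (b : A) (w : H),
      (inner ℂ v ((Φ b) w) : ℂ) = 0 ∧ (inner ℂ w ((Φ (star b)) v) : ℂ) = 0 := by
    intro b w
    apply aux_scalar (c := (inner ℂ w ((Φ (star b * b)) w) : ℂ))
    intro s
    have key := hcp 2 ![1, b] ![s • v, w]
    rw [Fin.sum_univ_two, Fin.sum_univ_two, Fin.sum_univ_two] at key
    simp only [Matrix.cons_val_zero, Matrix.cons_val_one, Matrix.head_cons, star_one, one_mul,
      mul_one, map_smul, inner_smul_left, inner_smul_right, hP1, hv, smul_zero,
      inner_zero_right, mul_zero, zero_add, ContinuousLinearMap.smul_apply] at key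
    calc (0:ℂ) ≤ (starRingEnd ℂ) s * inner ℂ v ((Φ b) w) +
          (s * inner ℂ w ((Φ (star b)) v) + inner ℂ w ((Φ (star b * b)) w)) := key
      _ = inner ℂ w ((Φ (star b * b)) w) + (starRingEnd ℂ) s * inner ℂ v ((Φ b) w)
          + s * inner ℂ w ((Φ (star b)) v) := by ring
  constructor
  · exact fun w => (main a w).1
  · have h2 : ∀ w : H, (inner ℂ w ((Φ a) v) : ℂ) = 0 := by
      intro w
      have := (main (star a) w).2
      rwa [star_star] at this
    have := h2 ((Φ a) v)
    rwa [inner_self_eq_zero] at this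

end Aux2

section Aux3
variable {H : Type*} [NormedAddCommGroup H] [InnerProductSpace ℂ H] [CompleteSpace H]
  [FiniteDimensional ℂ H]

lemma aux_spec_finite (P : H →L[ℂ] H) : (spectrum ℝ P).Finite := by
  have h1 : (spectrum ℂ P).Finite := by
    have e := Module.End.toContinuousLinearMap (𝕜 := ℂ) H
    have : P = e (e.symm P) := (e.apply_symm_apply P).symm
    rw [this, AlgEquiv.spectrum_eq]
    exact Module.End.finite_spectrum _
  have h2 : spectrum ℝ P = (algebraMap ℝ ℂ) ⁻¹' (spectrum ℂ P) :=
    spectrum.preimage_algebraMap ℂ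
  rw [h2]
  exact h1.preimage ((algebraMap ℝ ℂ).injective.injOn)

lemma aux_trace (T : H →L[ℂ] H) :
    LinearMap.trace ℂ H (T : H →ₗ[ℂ] H)
      = ∑ i, (inner ℂ ((stdOrthonormalBasis ℂ H) i) (T ((stdOrthonormalBasis ℂ H) i)) : ℂ) := by
  set b := stdOrthonormalBasis ℂ H
  rw [LinearMap.trace_eq_matrix_trace ℂ b.toBasis]
  rw [Matrix.trace]
  congr 1
  ext i
  rw [Matrix.diag_apply, LinearMap.toMatrix_apply]
  rw [b.coe_toBasis_repr_apply, b.repr_apply_apply, b.coe_toBasis]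
  rfl

lemma aux_isPositive {P : H →L[ℂ] H} (hP : IsPosOp P) : P.IsPositive := by
  rw [ContinuousLinearMap.isPositive_iff_complex]
  intro x
  have h := hP x
  rw [Complex.le_def] at h
  simp only [Complex.zero_re, Complex.zero_im] at h
  have hsym : (inner ℂ (P x) x : ℂ) = inner ℂ x (P x) := by
    rw [← inner_conj_symm]
    exact Complex.conj_eq_iff_im.mpr h.2.symm
  constructor
  · rw [hsym]
    exact Complex.ext (by simp) (by simp [h.2.symm])
  · rw [hsym]; exact h.1

lemma aux_spec_nonneg {P : H →L[ℂ] H} (hP : IsPosOp P) : ∀ x ∈ spectrum ℝ P, (0:ℝ) ≤ x := by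
  have : (0 : H →L[ℂ] H) ≤ P := (ContinuousLinearMap.nonneg_iff_isPositive P).mpr (aux_isPositive hP)
  exact spectrum_nonneg_of_nonneg this

/-- auxiliary functions for the functional calculus -/
noncomputable def auxsq : ℝ → ℝ := Real.sqrt
noncomputable def auxfi : ℝ → ℝ := fun x => if x = 0 then 0 else (Real.sqrt x)⁻¹
noncomputable def auxqf : ℝ → ℝ := fun x => if x = 0 then 0 else 1

variable {P : H →L[ℂ] H} (hsa : IsSelfAdjoint P)
  (hnn : ∀ x ∈ spectrum ℝ P, (0:ℝ) ≤ x)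

include hsa hnn

lemma aux_key (f g h : ℝ → ℝ) (hfg : ∀ x ∈ spectrum ℝ P, f x * g x = h x) :
    cfc f P * cfc g P = cfc h P := by
  rw [← cfc_mul _ _ P (Set.Finite.continuousOn (aux_spec_finite P) f)
    (Set.Finite.continuousOn (aux_spec_finite P) g)]
  exact cfc_congr hfg

lemma aux_sqsq : cfc auxsq P * cfc auxsq P = P := by
  have := aux_key hsa hnn auxsq auxsq id (fun x hx => Real.mul_self_sqrt (hnn x hx))
  rwa [cfc_id ℝ P hsa] at this

lemma aux_sqfi : cfc auxsq P * cfc auxfi P = cfc auxqf P := by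
  apply aux_key hsa hnn
  intro x hx
  simp only [auxsq, auxfi, auxqf]
  by_cases h : x = 0
  · simp [h]
  · rw [if_neg h, if_neg h]
    exact mul_inv_cancel₀ (Real.sqrt_ne_zero'.mpr (lt_of_le_of_ne (hnn x hx) (Ne.symm h)))

lemma aux_fisq : cfc auxfi P * cfc auxsq P = cfc auxqf P := by
  apply aux_key hsa hnn
  intro x hx
  simp only [auxsq, auxfi, auxqf]
  by_cases h : x = 0
  · simp [h]
  · rw [if_neg h, if_neg h]
    exact inv_mul_cancel₀ (Real.sqrt_ne_zero'.mpr (lt_of_le_of_ne (hnn x hx) (Ne.symm h)))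

lemma aux_fiP : cfc auxfi P * P = cfc auxsq P := by
  have := aux_key hsa hnn auxfi id auxsq ?_
  · rwa [cfc_id ℝ P hsa] at this
  intro x hx
  simp only [auxfi, auxsq, id]
  by_cases h : x = 0
  · simp [h]
  · rw [if_neg h]
    have hx' : 0 ≤ x := hnn x hx
    have : Real.sqrt x * Real.sqrt x = x := Real.mul_self_sqrt hx'
    have hs : Real.sqrt x ≠ 0 := Real.sqrt_ne_zero'.mpr (lt_of_le_of_ne hx' (Ne.symm h))
    field_simp
    rw [Real.sq_sqrt hx']

lemma aux_Pqf : P * cfc auxqf P = P := by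
  have := aux_key hsa hnn id auxqf id ?_
  · rwa [cfc_id ℝ P hsa] at this
  intro x hx
  simp only [auxqf, id]
  by_cases h : x = 0 <;> simp [h]

lemma aux_qfsq : cfc auxqf P * cfc auxsq P = cfc auxsq P := by
  apply aux_key hsa hnn
  intro x hx
  simp only [auxsq, auxqf]
  by_cases h : x = 0 <;> simp [h]

lemma aux_sqqf : cfc auxsq P * cfc auxqf P = cfc auxsq P := by
  apply aux_key hsa hnn
  intro x hx
  simp only [auxsq, auxqf]
  by_cases h : x = 0 <;> simp [h]

lemma aux_fiqf : cfc auxfi P * cfc auxqf P = cfc auxfi P := by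
  apply aux_key hsa hnn
  intro x hx
  simp only [auxfi, auxqf]
  by_cases h : x = 0 <;> simp [h]

lemma aux_qffi : cfc auxqf P * cfc auxfi P = cfc auxfi P := by
  apply aux_key hsa hnn
  intro x hx
  simp only [auxfi, auxqf]
  by_cases h : x = 0 <;> simp [h]

end Aux3

/-- Proposition `prop-Cstar-linear-ext-finite`. If `H` is finite-dimensional,
then for every positive `P ∈ B(H)`, every `P`-`C*`-extreme point of `CP^{(P)}(A,B(H))` is a
linear extreme point of `CP^{(P)}(A,B(H))`. -/
theorem stmt11 {A : Type*} [NormedRing A] [StarRing A] [CStarRing A] [NormedAlgebra ℂ A] [StarModule ℂ A] [CompleteSpace A]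
    {H : Type*} [NormedAddCommGroup H] [InnerProductSpace ℂ H] [CompleteSpace H] [FiniteDimensional ℂ H] :
    ∀ P : H →L[ℂ] H, IsPosOp P →
      ∀ Φ : A →ₗ[ℂ] (H →L[ℂ] H), IsPCExtreme P Φ → IsLinExtreme (CPP (A := A) P) Φ := by
  intro P hP Φ hΦ
  classical
  refine ⟨hΦ.1, ?_⟩
  intro n t Φs ht hmem hsum hdecomp
  -- Step 1 : apply P-C*-extremality to the scalar decomposition
  have hΦmem := hΦ.1
  have hcp : IsCPMap Φ := hΦmem.1
  have hΦ1 : Φ 1 = P := hΦmem.2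
  have htpos : ∀ j, 0 < t j := fun j => (ht j).1
  set T : Fin n → (H →L[ℂ] H) := fun j => ((Real.sqrt (t j) : ℝ) : ℂ) • (1 : H →L[ℂ] H) with hT
  have hsq : ∀ j, ((Real.sqrt (t j) : ℝ) : ℂ) * ((Real.sqrt (t j) : ℝ) : ℂ) = ((t j : ℝ) : ℂ) := by
    intro j
    rw [← Complex.ofReal_mul, Real.mul_self_sqrt (htpos j).le]
  have hconj : ∀ (j : Fin n) (X : H →L[ℂ] H), star (T j) * X * T j = ((t j : ℝ) : ℂ) • X := by
    intro j X
    simp only [hT, star_smul, star_one, Complex.star_def, Complex.conj_ofReal]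
    rw [smul_mul_assoc, mul_smul_comm, smul_mul_assoc, one_mul, mul_one, smul_smul, hsq]
  have hTunit : ∀ j, IsUnit (T j) := by
    intro j
    rw [isUnit_iff_exists]
    have hne : ((Real.sqrt (t j) : ℝ) : ℂ) ≠ 0 := by
      simp only [ne_eq, Complex.ofReal_eq_zero]
      exact (Real.sqrt_pos.mpr (htpos j)).ne'
    refine ⟨(((Real.sqrt (t j) : ℝ) : ℂ))⁻¹ • 1, ?_, ?_⟩
    · rw [hT, smul_mul_smul_comm, one_mul, mul_inv_cancel₀ hne, one_smul]
    · rw [hT, smul_mul_smul_comm, one_mul, inv_mul_cancel₀ hne, one_smul]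
  have hsumT : (∑ j, star (T j) * P * T j) = P := by
    calc ∑ j, star (T j) * P * T j = ∑ j, ((t j : ℝ) : ℂ) • P :=
          Finset.sum_congr rfl (fun j _ => hconj j P)
      _ = (∑ j, ((t j : ℝ) : ℂ)) • P := by rw [Finset.sum_smul]
      _ = P := by
          have : (∑ j, ((t j : ℝ) : ℂ)) = 1 := by
            rw [← Complex.ofReal_sum, hsum, Complex.ofReal_one]
          rw [this, one_smul]
  have hdecompT : Φ = ∑ j, (conjAd (T j)).comp (Φs j) := by
    rw [hdecomp]
    apply LinearMap.ext
    intro a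
    simp only [LinearMap.sum_apply, LinearMap.smul_apply, LinearMap.comp_apply]
    exact Finset.sum_congr rfl (fun j _ => (hconj j ((Φs j) a)).symm)
  have hSex := hΦ.2 n T Φs hTunit hmem hsumT hdecompT
  choose S hSunit hSeq using hSex
  -- basic consequences
  have hSPS : ∀ j, star (S j) * P * S j = P := by
    intro j
    have h1 := (hmem j).2
    rw [hSeq j] at h1
    simp only [LinearMap.comp_apply, hΦ1] at h1; exact h1
  have master : ∀ a : A, ∑ j, ((t j : ℝ) : ℂ) • (star (S j) * Φ a * S j) = Φ a := by
    intro a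
    have h1 : Φ a = ∑ j, ((t j : ℝ) : ℂ) • ((Φs j) a) := by
      rw [hdecomp]; simp [LinearMap.sum_apply]
    calc ∑ j, ((t j : ℝ) : ℂ) • (star (S j) * Φ a * S j)
        = ∑ j, ((t j : ℝ) : ℂ) • ((Φs j) a) :=
          Finset.sum_congr rfl (fun j _ => by rw [hSeq j]; rfl)
      _ = Φ a := h1.symm
  -- Step 2 : spectral objects
  have hsaP : IsSelfAdjoint P := (aux_isPositive hP).isSelfAdjoint
  have hnn : ∀ x ∈ spectrum ℝ P, (0:ℝ) ≤ x := aux_spec_nonneg hP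
  set Ph : H →L[ℂ] H := cfc auxsq P with hPh
  set F : H →L[ℂ] H := cfc auxfi P with hF
  set Q : H →L[ℂ] H := cfc auxqf P with hQ
  have hsaPh : IsSelfAdjoint Ph := cfc_predicate auxsq P
  have hsaF : IsSelfAdjoint F := cfc_predicate auxfi P
  have hsaQ : IsSelfAdjoint Q := cfc_predicate auxqf P
  have hPhPh : Ph * Ph = P := aux_sqsq hsaP hnn
  have hPhF : Ph * F = Q := aux_sqfi hsaP hnn
  have hFPh : F * Ph = Q := aux_fisq hsaP hnn
  have hFP : F * P = Ph := aux_fiP hsaP hnn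
  have hPQ : P * Q = P := aux_Pqf hsaP hnn
  have hQPh : Q * Ph = Ph := aux_qfsq hsaP hnn
  have hPhQ : Ph * Q = Ph := aux_sqqf hsaP hnn
  have hFQ : F * Q = F := aux_fiqf hsaP hnn
  have hQF : Q * F = F := aux_qffi hsaP hnn
  -- symmetric (inner ℂ product) versions
  have hsymPh : ∀ x y : H, (inner ℂ (Ph x) y : ℂ) = inner ℂ x (Ph y) := fun x y =>
    (ContinuousLinearMap.isSelfAdjoint_iff_isSymmetric.mp hsaPh) x y
  have hsymF : ∀ x y : H, (inner ℂ (F x) y : ℂ) = inner ℂ x (F y) := fun x y =>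
    (ContinuousLinearMap.isSelfAdjoint_iff_isSymmetric.mp hsaF) x y
  have hsymQ : ∀ x y : H, (inner ℂ (Q x) y : ℂ) = inner ℂ x (Q y) := fun x y =>
    (ContinuousLinearMap.isSelfAdjoint_iff_isSymmetric.mp hsaQ) x y
  -- kernel facts
  have hPker : ∀ v : H, (inner ℂ v (P v) : ℂ) = 0 → P v = 0 := by
    intro v hv
    have h1 : (inner ℂ v (P v) : ℂ) = inner ℂ (Ph v) (Ph v) := by
      conv_lhs => rw [← hPhPh]
      rw [ContinuousLinearMap.mul_apply, ← hsymPh v (Ph v)]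
    rw [h1, inner_self_eq_zero] at hv
    calc P v = Ph (Ph v) := by rw [← ContinuousLinearMap.mul_apply, hPhPh]
      _ = 0 := by rw [hv, map_zero]
  have hQker : ∀ v : H, P v = 0 → Q v = 0 := by
    intro v hv
    have h2 : Q = F * (F * P) := by rw [hFP, hFPh]
    rw [h2]
    simp only [ContinuousLinearMap.mul_apply, hv, map_zero]
  have hPQv : ∀ v : H, P (Q v) = P v := by
    intro v
    rw [← ContinuousLinearMap.mul_apply, hPQ]
  have hSker : ∀ (j : Fin n) (v : H), P v = 0 → P (S j v) = 0 := by
    intro j v hv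
    apply hPker
    have h1 : (inner ℂ (S j v) (P (S j v)) : ℂ) = inner ℂ v ((star (S j) * P * S j) v) := by
      simp only [ContinuousLinearMap.mul_apply]
      rw [ContinuousLinearMap.star_eq_adjoint, ContinuousLinearMap.adjoint_inner_right]
    rw [h1, hSPS j, hv, inner_zero_right]
  have hΦker : ∀ (a : A) (v : H), P v = 0 → Φ a v = 0 := fun a v hv => (aux_ker hcp hΦ1 hv a).2
  have hΦker' : ∀ (a : A) (v w : H), P v = 0 → (inner ℂ v (Φ a w) : ℂ) = 0 :=
    fun a v w hv => (aux_ker hcp hΦ1 hv a).1 w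
  -- compression facts for Φ
  have hkerQv : ∀ v : H, P (Q v - v) = 0 := by
    intro v
    rw [map_sub, hPQv, sub_self]
  have hΦQv : ∀ (a : A) (v : H), Φ a (Q v) = Φ a v := by
    intro a v
    have := hΦker a (Q v - v) (hkerQv v)
    rw [map_sub, sub_eq_zero] at this
    exact this
  have hQΦv : ∀ (a : A) (v : H), Q (Φ a v) = Φ a v := by
    intro a v
    apply ext_inner_left ℂ
    intro w
    rw [← hsymQ w (Φ a v)]
    have h0 := hΦker' a (Q w - w) v (hkerQv w)
    rw [inner_sub_left, sub_eq_zero] at h0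
    exact h0
  -- Step 3 : operator-level compressions and the operators R j, X a
  have hQΦ : ∀ a : A, Q * Φ a = Φ a := by
    intro a; ext v
    exact hQΦv a v
  have hΦQ : ∀ a : A, Φ a * Q = Φ a := by
    intro a; ext v
    exact hΦQv a v
  set R : Fin n → (H →L[ℂ] H) := fun j => Ph * S j * F with hRdef
  set Xf : A → (H →L[ℂ] H) := fun a => F * Φ a * F with hXdef
  have hstarR : ∀ j, star (R j) = F * star (S j) * Ph := by
    intro j
    simp only [hRdef, star_mul, hsaF.star_eq, hsaPh.star_eq, mul_assoc]
  have hstarX : ∀ a, star (Xf a) = F * star (Φ a) * F := by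
    intro a
    simp only [hXdef, star_mul, hsaF.star_eq, mul_assoc]
  have hRR : ∀ j, star (R j) * R j = Q := by
    intro j
    have h1 : star (R j) * R j = F * ((star (S j) * P * S j) * F) := by
      rw [hstarR j, hRdef, ← hPhPh]
      simp only [mul_assoc]
    rw [hSPS j] at h1
    rw [h1, ← mul_assoc, hFP, hPhF]
  have hQX : ∀ a, Q * Xf a = Xf a := by
    intro a
    rw [hXdef]
    simp only [← mul_assoc, hQF]
  have hXQ : ∀ a, Xf a * Q = Xf a := by
    intro a
    rw [hXdef]
    simp only [mul_assoc, hFQ]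
  have hRX : ∀ (j) (a : A), star (R j) * Xf a * R j = F * (star (S j) * Φ a * S j) * F := by
    intro j a
    rw [hstarR j, hRdef, hXdef]
    simp only [mul_assoc]
    rw [aux_mmul hPhF, aux_mmul hFPh]   -- Ph*(F*m) = Q*m , F*(Ph*m) = Q*m
    rw [aux_mmul (hQΦ a)]
    rw [aux_mmul (hΦQ a)]
  -- Step 4 : the fixed-point/trace argument, yielding star (R j) * Xf a * R j = Xf a
  have hmasterX : ∀ a : A, ∑ j, ((t j : ℝ) : ℂ) • (star (R j) * Xf a * R j) = Xf a := by
    intro a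
    calc ∑ j, ((t j : ℝ) : ℂ) • (star (R j) * Xf a * R j)
        = ∑ j, ((t j : ℝ) : ℂ) • (F * (star (S j) * Φ a * S j) * F) :=
          Finset.sum_congr rfl (fun j _ => by rw [hRX j a])
      _ = F * (∑ j, ((t j : ℝ) : ℂ) • (star (S j) * Φ a * S j)) * F := by
          rw [Finset.mul_sum, Finset.sum_mul]
          exact Finset.sum_congr rfl (fun j _ => by
            rw [mul_smul_comm, smul_mul_assoc])
      _ = Xf a := by rw [master a, hXdef]
  have hmasterXstar : ∀ a : A,
      ∑ j, ((t j : ℝ) : ℂ) • (star (R j) * star (Xf a) * R j) = star (Xf a) := by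
    intro a
    have h0 := congrArg (fun M : H →L[ℂ] H => star M) (hmasterX a)
    simp only [star_sum, star_smul, star_mul, star_star, Complex.star_def,
      Complex.conj_ofReal] at h0
    calc ∑ j, ((t j : ℝ) : ℂ) • (star (R j) * star (Xf a) * R j)
        = ∑ j, ((t j : ℝ) : ℂ) • (star (R j) * (star (Xf a) * R j)) := by
          simp only [mul_assoc]
      _ = star (Xf a) := h0
  have hsum1 : (∑ j, ((t j : ℝ) : ℂ)) = 1 := by
    rw [← Complex.ofReal_sum, hsum, Complex.ofReal_one]
  -- R j * star (R j) = Q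
  have hRRstar : ∀ j, R j * star (R j) = Q := by
    intro j
    have hQR : Q * R j = R j := by
      rw [hRdef]
      simp only [← mul_assoc, hQPh]
    have hRQ : R j * Q = R j := by
      rw [hRdef]
      simp only [mul_assoc, hFQ]
    have hQRs : Q * star (R j) = star (R j) := by
      have := congrArg (fun M : H →L[ℂ] H => star M) hRQ
      simpa only [star_mul, hsaQ.star_eq] using this
    have hRsQ : star (R j) * Q = star (R j) := by
      have := congrArg (fun M : H →L[ℂ] H => star M) hQR
      simpa only [star_mul, hsaQ.star_eq] using this
    set E : H →L[ℂ] H := Q - R j * star (R j) with hE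
    have hEsa : IsSelfAdjoint E := by
      rw [hE]
      apply IsSelfAdjoint.sub hsaQ
      rw [IsSelfAdjoint, star_mul, star_star]
    have hEE : E * E = E := by
      rw [hE]
      have h1 : (R j * star (R j)) * (R j * star (R j)) = R j * star (R j) := by
        calc (R j * star (R j)) * (R j * star (R j))
            = R j * ((star (R j) * R j) * star (R j)) := by simp only [mul_assoc]
          _ = R j * (Q * star (R j)) := by rw [hRR j]
          _ = R j * star (R j) := by rw [hQRs]
      have h2 : Q * (R j * star (R j)) = R j * star (R j) := by
        rw [← mul_assoc, hQR]
      have h3 : (R j * star (R j)) * Q = R j * star (R j) := by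
        rw [mul_assoc, hRsQ]
      rw [sub_mul, mul_sub, mul_sub]
      rw [h1, h2, h3]
      have hQQ : Q * Q = Q := by
        have : ∀ x ∈ spectrum ℝ P, auxqf x * auxqf x = auxqf x := by
          intro x hx
          simp only [auxqf]
          by_cases h : x = 0 <;> simp [h]
        exact aux_key hsaP hnn _ _ _ this
      rw [hQQ]
      abel
    -- trace of E is zero
    have htrE : LinearMap.trace ℂ H (E : H →ₗ[ℂ] H) = 0 := by
      have h1 : LinearMap.trace ℂ H ((R j * star (R j) : H →L[ℂ] H) : H →ₗ[ℂ] H)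
          = LinearMap.trace ℂ H ((star (R j) * R j : H →L[ℂ] H) : H →ₗ[ℂ] H) := by
        have := LinearMap.trace_mul_comm ℂ ((R j : H →L[ℂ] H) : H →ₗ[ℂ] H)
          ((star (R j) : H →L[ℂ] H) : H →ₗ[ℂ] H)
        convert this using 2 <;> rfl
      rw [hE]
      simp only [ContinuousLinearMap.coe_sub, map_sub]
      rw [h1, hRR j, sub_self]
    -- selfadjoint idempotent with zero trace vanishes
    have hEzero : E = 0 := by
      have hsymE : ∀ x y : H, (inner ℂ (E x) y : ℂ) = inner ℂ x (E y) := fun x y =>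
        (ContinuousLinearMap.isSelfAdjoint_iff_isSymmetric.mp hEsa) x y
      set b := stdOrthonormalBasis ℂ H
      have htr2 := aux_trace E
      rw [htrE] at htr2
      have hdiag : ∀ i, (inner ℂ (b i) (E (b i)) : ℂ) = ((‖E (b i)‖^2 : ℝ) : ℂ) := by
        intro i
        calc (inner ℂ (b i) (E (b i)) : ℂ) = inner ℂ (b i) (E (E (b i))) := by
              conv_lhs => rw [← hEE]
              rw [ContinuousLinearMap.mul_apply]
          _ = inner ℂ (E (b i)) (E (b i)) := by rw [← hsymE (b i) (E (b i))]
          _ = ((‖E (b i)‖^2 : ℝ) : ℂ) := by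
              rw [inner_self_eq_norm_sq_to_K]
              norm_cast
      rw [Finset.sum_congr rfl (fun i _ => hdiag i)] at htr2
      rw [← Complex.ofReal_sum] at htr2
      have hreal : ∑ i, ‖E (b i)‖^2 = 0 := by exact_mod_cast htr2.symm
      have hterm : ∀ i ∈ Finset.univ, ‖E (b i)‖^2 = 0 :=
        (Finset.sum_eq_zero_iff_of_nonneg
          (fun i _ => sq_nonneg ‖E (b i)‖)).mp hreal
      have hEb : ∀ i, E (b i) = 0 := by
        intro i
        have := hterm i (Finset.mem_univ i)
        rwa [sq_eq_zero_iff, norm_eq_zero] at this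
      apply ContinuousLinearMap.coe_injective
      apply Module.Basis.ext b.toBasis
      intro i
      simp only [OrthonormalBasis.coe_toBasis, ContinuousLinearMap.coe_coe]
      rw [hEb i]
      simp
    have := sub_eq_zero.mp (by rw [← hE, hEzero] : Q - R j * star (R j) = 0)
    exact this.symm
  -- Step 5 : the trace argument
  have hstar_ad : ∀ (M : H →L[ℂ] H) (x y : H), (inner ℂ x ((star M) y) : ℂ) = inner ℂ (M x) y := by
    intro M x y
    rw [ContinuousLinearMap.star_eq_adjoint, ContinuousLinearMap.adjoint_inner_right]
  have htrace_conj : ∀ (Rj M : H →L[ℂ] H), Rj * star Rj = Q → M * Q = M →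
      LinearMap.trace ℂ H ((star Rj * M * Rj : H →L[ℂ] H) : H →ₗ[ℂ] H)
        = LinearMap.trace ℂ H ((M : H →L[ℂ] H) : H →ₗ[ℂ] H) := by
    intro Rj M h1 h2
    have c1 : ((star Rj * M * Rj : H →L[ℂ] H) : H →ₗ[ℂ] H)
        = ((star Rj * M : H →L[ℂ] H) : H →ₗ[ℂ] H) * ((Rj : H →L[ℂ] H) : H →ₗ[ℂ] H) := rfl
    rw [c1, LinearMap.trace_mul_comm]
    have c2 : ((Rj : H →L[ℂ] H) : H →ₗ[ℂ] H) * ((star Rj * M : H →L[ℂ] H) : H →ₗ[ℂ] H)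
        = ((Q * M : H →L[ℂ] H) : H →ₗ[ℂ] H) := by
      have : Rj * (star Rj * M) = Q * M := by rw [← mul_assoc, h1]
      rw [← this]; rfl
    rw [c2]
    have c3 : ((Q * M : H →L[ℂ] H) : H →ₗ[ℂ] H)
        = ((Q : H →L[ℂ] H) : H →ₗ[ℂ] H) * ((M : H →L[ℂ] H) : H →ₗ[ℂ] H) := rfl
    rw [c3, LinearMap.trace_mul_comm]
    have c4 : ((M : H →L[ℂ] H) : H →ₗ[ℂ] H) * ((Q : H →L[ℂ] H) : H →ₗ[ℂ] H)
        = ((M * Q : H →L[ℂ] H) : H →ₗ[ℂ] H) := rfl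
    rw [c4, h2]
  have hZid : ∀ (a : A) (j : Fin n), star (R j) * Xf a * R j = Xf a := by
    intro a
    have hstarZ : ∀ j, star (star (R j) * Xf a * R j - Xf a)
        = star (R j) * star (Xf a) * R j - star (Xf a) := by
      intro j
      simp only [star_sub, star_mul, star_star, mul_assoc]
    have hmid : ∀ j, (star (R j) * star (Xf a) * R j) * (star (R j) * Xf a * R j)
        = star (R j) * (star (Xf a) * Xf a) * R j := by
      intro j
      calc (star (R j) * star (Xf a) * R j) * (star (R j) * Xf a * R j)
          = star (R j) * (star (Xf a) * (R j * (star (R j) * (Xf a * R j)))) := by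
            simp only [mul_assoc]
        _ = star (R j) * (star (Xf a) * (Q * (Xf a * R j))) := by
            rw [aux_mmul (hRRstar j)]
        _ = star (R j) * (star (Xf a) * (Xf a * R j)) := by
            rw [aux_mmul (hQX a)]
        _ = star (R j) * (star (Xf a) * Xf a) * R j := by
            simp only [mul_assoc]
    have hZZ : ∀ j, star (star (R j) * Xf a * R j - Xf a) * (star (R j) * Xf a * R j - Xf a)
        = star (R j) * (star (Xf a) * Xf a) * R j
          - (star (R j) * star (Xf a) * R j) * Xf a
          - star (Xf a) * (star (R j) * Xf a * R j) + star (Xf a) * Xf a := by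
      intro j
      rw [hstarZ j, sub_mul, mul_sub, mul_sub, hmid j]
      abel
    have hsumZZ : ∑ j, ((t j : ℝ) : ℂ) •
          (star (star (R j) * Xf a * R j - Xf a) * (star (R j) * Xf a * R j - Xf a))
        = (∑ j, ((t j : ℝ) : ℂ) • (star (R j) * (star (Xf a) * Xf a) * R j))
          - star (Xf a) * Xf a := by
      rw [Finset.sum_congr rfl (fun j _ => by rw [hZZ j])]
      have e1 : ∑ j, ((t j : ℝ) : ℂ) • ((star (R j) * star (Xf a) * R j) * Xf a)
          = star (Xf a) * Xf a := by
        calc ∑ j, ((t j : ℝ) : ℂ) • ((star (R j) * star (Xf a) * R j) * Xf a)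
            = (∑ j, ((t j : ℝ) : ℂ) • (star (R j) * star (Xf a) * R j)) * Xf a := by
              rw [Finset.sum_mul]
              exact Finset.sum_congr rfl (fun j _ => by rw [smul_mul_assoc])
          _ = star (Xf a) * Xf a := by rw [hmasterXstar a]
      have e2 : ∑ j, ((t j : ℝ) : ℂ) • (star (Xf a) * (star (R j) * Xf a * R j))
          = star (Xf a) * Xf a := by
        calc ∑ j, ((t j : ℝ) : ℂ) • (star (Xf a) * (star (R j) * Xf a * R j))
            = star (Xf a) * (∑ j, ((t j : ℝ) : ℂ) • (star (R j) * Xf a * R j)) := by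
              rw [Finset.mul_sum]
              exact Finset.sum_congr rfl (fun j _ => by rw [mul_smul_comm])
          _ = star (Xf a) * Xf a := by rw [hmasterX a]
      have e3 : ∑ j, ((t j : ℝ) : ℂ) • (star (Xf a) * Xf a) = star (Xf a) * Xf a := by
        rw [← Finset.sum_smul, hsum1, one_smul]
      calc ∑ j, ((t j : ℝ) : ℂ) • (star (R j) * (star (Xf a) * Xf a) * R j
              - (star (R j) * star (Xf a) * R j) * Xf a
              - star (Xf a) * (star (R j) * Xf a * R j) + star (Xf a) * Xf a)
          = ∑ j, (((t j : ℝ) : ℂ) • (star (R j) * (star (Xf a) * Xf a) * R j)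
              - ((t j : ℝ) : ℂ) • ((star (R j) * star (Xf a) * R j) * Xf a)
              - ((t j : ℝ) : ℂ) • (star (Xf a) * (star (R j) * Xf a * R j))
              + ((t j : ℝ) : ℂ) • (star (Xf a) * Xf a)) := by
            exact Finset.sum_congr rfl (fun j _ => by
              simp only [smul_sub, smul_add])
        _ = (∑ j, ((t j : ℝ) : ℂ) • (star (R j) * (star (Xf a) * Xf a) * R j))
              - (∑ j, ((t j : ℝ) : ℂ) • ((star (R j) * star (Xf a) * R j) * Xf a))
              - (∑ j, ((t j : ℝ) : ℂ) • (star (Xf a) * (star (R j) * Xf a * R j)))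
              + (∑ j, ((t j : ℝ) : ℂ) • (star (Xf a) * Xf a)) := by
            simp only [Finset.sum_sub_distrib, Finset.sum_add_distrib]
        _ = (∑ j, ((t j : ℝ) : ℂ) • (star (R j) * (star (Xf a) * Xf a) * R j))
              - star (Xf a) * Xf a := by
            rw [e1, e2, e3]; abel
    -- the trace of the right-hand side is zero
    have hXQa : star (Xf a) * Xf a * Q = star (Xf a) * Xf a := by
      rw [mul_assoc, hXQ a]
    have htrW : LinearMap.trace ℂ H
        ((((∑ j, ((t j : ℝ) : ℂ) • (star (R j) * (star (Xf a) * Xf a) * R j))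
          - star (Xf a) * Xf a : H →L[ℂ] H)) : H →ₗ[ℂ] H) = 0 := by
      rw [ContinuousLinearMap.coe_sub, map_sub]
      have hs : ((∑ j, ((t j : ℝ) : ℂ) • (star (R j) * (star (Xf a) * Xf a) * R j) :
          H →L[ℂ] H) : H →ₗ[ℂ] H)
          = ∑ j, ((t j : ℝ) : ℂ) • ((star (R j) * (star (Xf a) * Xf a) * R j : H →L[ℂ] H) :
            H →ₗ[ℂ] H) := by
        simp only [ContinuousLinearMap.coe_sum, ContinuousLinearMap.coe_smul]
      rw [hs, map_sum]
      have hterm : ∀ j, LinearMap.trace ℂ H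
          (((t j : ℝ) : ℂ) • ((star (R j) * (star (Xf a) * Xf a) * R j : H →L[ℂ] H) :
            H →ₗ[ℂ] H))
          = ((t j : ℝ) : ℂ) * LinearMap.trace ℂ H
            ((star (Xf a) * Xf a : H →L[ℂ] H) : H →ₗ[ℂ] H) := by
        intro j
        rw [map_smul, htrace_conj (R j) (star (Xf a) * Xf a) (hRRstar j) hXQa]
        rfl
      rw [Finset.sum_congr rfl (fun j _ => hterm j), ← Finset.sum_mul, hsum1, one_mul, sub_self]
    -- put the two together
    have hW := congrArg (fun M : H →L[ℂ] H => LinearMap.trace ℂ H (M : H →ₗ[ℂ] H)) hsumZZ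
    simp only [htrW] at hW
    -- expand the trace as a sum of diagonal entries
    set b := stdOrthonormalBasis ℂ H with hb
    rw [aux_trace] at hW
    have hdiag : ∀ i, (inner ℂ (b i)
        ((∑ j, ((t j : ℝ) : ℂ) • (star (star (R j) * Xf a * R j - Xf a)
          * (star (R j) * Xf a * R j - Xf a))) (b i)) : ℂ)
        = ((∑ j, t j * ‖(star (R j) * Xf a * R j - Xf a) (b i)‖^2 : ℝ) : ℂ) := by
      intro i
      rw [ContinuousLinearMap.sum_apply, inner_sum]
      have e : ∀ j : Fin n, (inner ℂ (b i)
          ((((t j : ℝ) : ℂ) • (star (star (R j) * Xf a * R j - Xf a)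
            * (star (R j) * Xf a * R j - Xf a))) (b i)) : ℂ)
          = ((t j * ‖(star (R j) * Xf a * R j - Xf a) (b i)‖^2 : ℝ) : ℂ) := by
        intro j
        rw [ContinuousLinearMap.smul_apply, inner_smul_right, ContinuousLinearMap.mul_apply,
          hstar_ad, inner_self_eq_norm_sq_to_K]
        simp only [ContinuousLinearMap.coe_sub', Pi.sub_apply]
        push_cast
        rfl
      rw [Finset.sum_congr rfl (fun j _ => e j), ← Complex.ofReal_sum]
    rw [Finset.sum_congr rfl (fun i _ => hdiag i), ← Complex.ofReal_sum] at hW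
    have hreal : ∑ i, ∑ j, t j * ‖(star (R j) * Xf a * R j - Xf a) (b i)‖^2 = 0 := by
      exact_mod_cast hW
    have hnn2 : ∀ (i) (j), 0 ≤ t j * ‖(star (R j) * Xf a * R j - Xf a) (b i)‖^2 :=
      fun i j => mul_nonneg (htpos j).le (sq_nonneg _)
    have hzero : ∀ (j) (i), (star (R j) * Xf a * R j - Xf a) (b i) = 0 := by
      intro j i
      have h1 := (Finset.sum_eq_zero_iff_of_nonneg
        (fun i _ => Finset.sum_nonneg (fun j _ => hnn2 i j))).mp hreal i (Finset.mem_univ i)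
      have h2 := (Finset.sum_eq_zero_iff_of_nonneg
        (fun j _ => hnn2 i j)).mp h1 j (Finset.mem_univ j)
      have h3 := (mul_eq_zero.mp h2).resolve_left (htpos j).ne'
      rwa [sq_eq_zero_iff, norm_eq_zero] at h3
    intro j
    rw [← sub_eq_zero]
    apply ContinuousLinearMap.coe_injective
    apply Module.Basis.ext b.toBasis
    intro i
    simp only [OrthonormalBasis.coe_toBasis, ContinuousLinearMap.coe_coe]
    rw [hzero j i]
    simp
  -- Step 6 : unwinding, to show each Φs j = Φ
  intro j
  rw [hSeq j]
  apply LinearMap.ext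
  intro a
  show star (S j) * Φ a * S j = Φ a
  have hFPhv : ∀ v : H, F (Ph v) = Q v := by
    intro v
    rw [← ContinuousLinearMap.mul_apply, hFPh]
  have hRv : ∀ v : H, R j v = Ph (S j (F v)) := by
    intro v
    rw [hRdef]
    simp only [ContinuousLinearMap.mul_apply]
  have hXv : ∀ (a' : A) (v : H), Xf a' v = F (Φ a' (F v)) := by
    intro a' v
    rw [hXdef]
    simp only [ContinuousLinearMap.mul_apply]
  -- removal of Q on both slots
  have hrem : ∀ (v w : H), (inner ℂ (S j (Q w)) (Φ a (S j (Q v))) : ℂ)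
      = inner ℂ (S j w) (Φ a (S j v)) := by
    intro v w
    have hright : Φ a (S j (Q v)) = Φ a (S j v) := by
      have h1 : P (S j (Q v - v)) = 0 := hSker j _ (hkerQv v)
      have h2 := hΦker a _ h1
      rw [map_sub, map_sub, sub_eq_zero] at h2
      exact h2
    have hleft : (inner ℂ (S j (Q w)) (Φ a (S j v)) : ℂ) = inner ℂ (S j w) (Φ a (S j v)) := by
      have h1 : P (S j (Q w - w)) = 0 := hSker j _ (hkerQv w)
      have h2 := hΦker' a _ (S j v) h1
      rw [map_sub, inner_sub_left, sub_eq_zero] at h2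
      exact h2
    rw [hright, hleft]
  have hremQ : ∀ (v w : H), (inner ℂ (Q w) (Φ a (Q v)) : ℂ) = inner ℂ w (Φ a v) := by
    intro v w
    rw [hΦQv a v, hsymQ w (Φ a v), hQΦv a v]
  -- the key identity coming from hZid
  have hkey : ∀ u u' : H, (inner ℂ (S j (F u')) (Φ a (S j (F u))) : ℂ)
      = inner ℂ (F u') (Φ a (F u)) := by
    intro u u'
    have h0 : (inner ℂ u' ((star (R j) * Xf a * R j) u) : ℂ) = inner ℂ u' (Xf a u) := by
      rw [hZid a j]
    calc (inner ℂ (S j (F u')) (Φ a (S j (F u))) : ℂ)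
        = inner ℂ (Q (S j (F u'))) (Φ a (Q (S j (F u)))) := by
          rw [hΦQv a (S j (F u)), hsymQ (S j (F u')) _, hQΦv a (S j (F u))]
      _ = inner ℂ (F (Ph (S j (F u')))) (Φ a (F (Ph (S j (F u))))) := by
          rw [hFPhv, hFPhv]
      _ = inner ℂ (Ph (S j (F u'))) (F (Φ a (F (Ph (S j (F u)))))) := by
          rw [hsymF]
      _ = inner ℂ (R j u') (Xf a (R j u)) := by rw [hRv, hRv, hXv]
      _ = inner ℂ u' ((star (R j) * Xf a * R j) u) := by
          simp only [ContinuousLinearMap.mul_apply]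
          rw [hstar_ad]
      _ = inner ℂ u' (Xf a u) := h0
      _ = inner ℂ (F u') (Φ a (F u)) := by rw [hXv, ← hsymF]
  -- conclude
  ext v
  apply ext_inner_left ℂ
  intro w
  have hmain := hkey (Ph v) (Ph w)
  rw [hFPhv, hFPhv] at hmain
  rw [hrem v w, hremQ v w] at hmain
  calc (inner ℂ w ((star (S j) * Φ a * S j) v) : ℂ)
      = inner ℂ (S j w) (Φ a (S j v)) := by
        simp only [ContinuousLinearMap.mul_apply]
        rw [hstar_ad]
    _ = inner ℂ w (Φ a v) := hmain

end
end

section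
/- Let A be a unital C*-algebra, H a complex Hilbert space, and let C be any C*-convex subset of CP(A,B(H)) with UCP(A,B(H)) ⊆ C ⊆ CCP(A,B(H)). Then the set of C*-extreme points of UCP(A,B(H)) equals the intersection of UCP(A,B(H)) with the set of C*-extreme points of C. -/
open scoped ComplexOrder

noncomputable section

section Aux
variable {H : Type*} [NormedAddCommGroup H] [InnerProductSpace ℂ H] [CompleteSpace H]

lemma inner_conj_eq (T D : H →L[ℂ] H) (x : H) :
    (inner ℂ x ((star T * D * T) x) : ℂ) = inner ℂ (T x) (D (T x)) := by
  simp [ContinuousLinearMap.mul_apply, ContinuousLinearMap.star_eq_adjoint,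
    ContinuousLinearMap.adjoint_inner_right]

lemma pos_sum_zero {n : ℕ} (T : Fin n → (H →L[ℂ] H)) (D : Fin n → (H →L[ℂ] H))
    (hD : ∀ j, IsPosOp (D j)) (hT : ∀ j, IsUnit (T j))
    (h0 : (∑ j, star (T j) * D j * T j) = 0) : ∀ j, D j = 0 := by
  have key : ∀ j, ∀ x : H, (inner ℂ (T j x) (D j (T j x)) : ℂ) = 0 := by
    intro j x
    have hsum : ∑ k, (inner ℂ x ((star (T k) * D k * T k) x) : ℂ) = 0 := by
      rw [← inner_sum, ← ContinuousLinearMap.sum_apply, h0]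
      simp
    have hterm : ∀ k ∈ Finset.univ, 0 ≤ (inner ℂ x ((star (T k) * D k * T k) x) : ℂ) := by
      intro k _
      rw [inner_conj_eq]
      exact hD k _
    have h := (Finset.sum_eq_zero_iff_of_nonneg hterm).mp hsum j (Finset.mem_univ j)
    rwa [inner_conj_eq] at h
  intro j
  have hall : ∀ y : H, (inner ℂ y (D j y) : ℂ) = 0 := by
    intro y
    have hy : T j ((↑(hT j).unit⁻¹ : H →L[ℂ] H) y) = y := by
      calc T j ((↑(hT j).unit⁻¹ : H →L[ℂ] H) y)
          = ((↑(hT j).unit * ↑(hT j).unit⁻¹ : H →L[ℂ] H)) y := rfl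
        _ = y := by rw [Units.mul_inv]; rfl
    have := key j ((↑(hT j).unit⁻¹ : H →L[ℂ] H) y)
    rwa [hy] at this
  have hcoe : (D j : H →ₗ[ℂ] H) = 0 := by
    apply (inner_map_self_eq_zero _).mp
    intro x
    rw [← inner_conj_symm]
    have : (inner ℂ x ((D j) x) : ℂ) = 0 := hall x
    simp only [ContinuousLinearMap.coe_coe]
    rw [this, map_zero]
  exact ContinuousLinearMap.coe_injective (by simpa using hcoe)

end Aux

/-- Proposition `prop-UCP-C-Cstar`. For any `C*`-convex set `C` with
`UCP(A,B(H)) ⊆ C ⊆ CCP(A,B(H))`, the `C*`-extreme points of `UCP(A,B(H))` are exactly the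
members of `UCP(A,B(H))` that are `C*`-extreme points of `C`. -/
theorem stmt14 {A : Type*} [NormedRing A] [StarRing A] [CStarRing A] [NormedAlgebra ℂ A] [StarModule ℂ A] [CompleteSpace A]
    {H : Type*} [NormedAddCommGroup H] [InnerProductSpace ℂ H] [CompleteSpace H]
    (C : Set (A →ₗ[ℂ] (H →L[ℂ] H)))
    (hconv : ∀ (n : ℕ) (T : Fin n → (H →L[ℂ] H)) (Φs : Fin n → (A →ₗ[ℂ] (H →L[ℂ] H))),
      (∀ j, Φs j ∈ C) → (∑ j, star (T j) * T j) = 1 →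
      (∑ j, (conjAd (T j)).comp (Φs j)) ∈ C)
    (hUC : CPP (A := A) (1 : H →L[ℂ] H) ⊆ C)
    (hCC : C ⊆ CCPmaps (A := A) (H := H)) :
    {Φ : A →ₗ[ℂ] (H →L[ℂ] H) | IsCstarExtreme (CPP (A := A) (1 : H →L[ℂ] H)) Φ} =
      CPP (A := A) (1 : H →L[ℂ] H) ∩
        {Φ : A →ₗ[ℂ] (H →L[ℂ] H) | IsCstarExtreme C Φ} := by
  ext Φ
  constructor
  · rintro ⟨hΦmem, hext⟩
    refine ⟨hΦmem, hUC hΦmem, ?_⟩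
    intro n T Φs hTu hΦs hsum heq
    -- show each Φs j is unital
    have hΦsC : ∀ j, IsCPMap (Φs j) ∧ IsPosOp (1 - (Φs j) 1) := fun j => hCC (hΦs j)
    have h1 : (1 : H →L[ℂ] H) = ∑ j, star (T j) * (Φs j) 1 * T j := by
      have := congrArg (fun (Ψ : A →ₗ[ℂ] (H →L[ℂ] H)) => Ψ 1) heq
      simpa [hΦmem.2, conjAd, LinearMap.sum_apply] using this
    have hzero : (∑ j, star (T j) * (1 - (Φs j) 1) * T j) = 0 := by
      have : (∑ j, star (T j) * (1 - (Φs j) 1) * T j)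
          = (∑ j, star (T j) * T j) - ∑ j, star (T j) * (Φs j) 1 * T j := by
        rw [← Finset.sum_sub_distrib]
        exact Finset.sum_congr rfl fun j _ => by noncomm_ring
      rw [this, hsum, ← h1, sub_self]
    have hunital : ∀ j, (Φs j) 1 = 1 := by
      intro j
      have := pos_sum_zero T (fun j => 1 - (Φs j) 1) (fun j => (hΦsC j).2) hTu hzero j
      have := sub_eq_zero.mp this
      exact this.symm
    exact hext n T Φs hTu (fun j => ⟨(hΦsC j).1, hunital j⟩) hsum heq
  · rintro ⟨hΦmem, _, hext⟩
    refine ⟨hΦmem, ?_⟩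
    intro n T Φs hTu hΦs hsum heq
    exact hext n T Φs hTu (fun j => hUC (hΦs j)) hsum heq


end
end

section
/- Let A be a unital C*-algebra, H a complex Hilbert space, P ∈ B(H) an orthogonal projection, S ∈ B(H) invertible, and Φ, Ψ ∈ CP^{(P)}(A,B(H)) such that Ψ = Ad_S∘Φ. Then there exists a unitary U ∈ B(H) such that Ψ = Ad_U∘Φ. -/
open scoped ComplexOrder

noncomputable section

section Aux
variable {A H : Type*}
variable [NormedAddCommGroup H] [InnerProductSpace ℂ H]
variable [Ring A] [StarRing A] [Algebra ℂ A]

lemma scalar_aux16 (α β γ : ℂ) (h : ∀ t : ℂ, 0 ≤ (starRingEnd ℂ) t * α + t * β + γ) :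
    α = 0 ∧ β = 0 := by
  have key : ∀ t : ℂ, (starRingEnd ℂ) t * α + t * β = 0 := by
    intro t
    set D := (starRingEnd ℂ) t * α + t * β with hD
    have hs : ∀ s : ℝ, 0 ≤ (s : ℂ) * D + γ := by
      intro s
      have h1 := h ((s : ℂ) * t)
      have : (starRingEnd ℂ) ((s:ℂ) * t) * α + ((s:ℂ) * t) * β + γ = (s:ℂ) * D + γ := by
        simp [hD, map_mul, Complex.conj_ofReal]; ring
      rwa [this] at h1
    have him : ∀ s : ℝ, s * D.im + γ.im = 0 := by
      intro s
      have := (Complex.le_def.mp (hs s)).2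
      simpa using this.symm
    have hre : ∀ s : ℝ, 0 ≤ s * D.re + γ.re := by
      intro s
      have := (Complex.le_def.mp (hs s)).1
      simpa using this
    have hDim : D.im = 0 := by
      have h0 := him 0; have h1 := him 1
      simp at h0; linarith [h1]
    have hDre : D.re = 0 := by
      by_contra hne
      have := hre ((-(γ.re) - 1) / D.re)
      rw [div_mul_cancel₀ _ hne] at this
      linarith
    exact Complex.ext hDre hDim
  have k1 := key 1
  have kI := key Complex.I
  simp at k1 kI
  have hβα : β = α := by
    have hI : Complex.I * (β - α) = 0 := by linear_combination kI
    rcases mul_eq_zero.mp hI with h' | h'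
    · exact absurd h' Complex.I_ne_zero
    · exact sub_eq_zero.mp h'
  have hα : α = 0 := by
    have : α + α = 0 := by rw [hβα] at k1; exact k1
    linear_combination this / 2
  exact ⟨hα, by rw [hβα, hα]⟩

lemma cp_inner16 {Φ : A →ₗ[ℂ] (H →L[ℂ] H)} (hcp : IsCPMap Φ) {P : H →L[ℂ] H}
    (hP1 : Φ 1 = P) {x : H} (hx : P x = 0) (b : A) (y : H) :
    (inner ℂ x ((Φ b) y) : ℂ) = 0 ∧ (inner ℂ y ((Φ (star b)) x) : ℂ) = 0 := by
  apply scalar_aux16 _ _ (inner ℂ y ((Φ (star b * b)) y))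
  intro t
  have := hcp 2 ![1, b] ![t • x, y]
  simp only [Fin.sum_univ_two, Matrix.cons_val_zero, Matrix.cons_val_one, Matrix.head_cons,
    star_one, one_mul, mul_one, map_smul, inner_smul_left, inner_smul_right,
    ContinuousLinearMap.smul_apply, hP1, hx, smul_zero, inner_zero_right, mul_zero,
    add_zero, zero_add] at this
  exact this.trans_eq (by ring)

variable [CompleteSpace H]

lemma sa_inner16 {P : H →L[ℂ] H} (hPsa : IsSelfAdjoint P) (u v : H) :
    (inner ℂ (P u) v : ℂ) = inner ℂ u (P v) := by
  have h := ContinuousLinearMap.adjoint_inner_left P v u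
  rw [hPsa.adjoint_eq] at h
  exact h

lemma cp_support16 {Φ : A →ₗ[ℂ] (H →L[ℂ] H)} (hcp : IsCPMap Φ) {P : H →L[ℂ] H}
    (hP1 : Φ 1 = P) (hPsa : IsSelfAdjoint P) (hPidem : P * P = P) (a : A) :
    P * Φ a = Φ a ∧ Φ a * P = Φ a := by
  have hker : ∀ w : H, P w = 0 → (Φ a) w = 0 := by
    intro w hw
    have h2 := fun y => (cp_inner16 hcp hP1 hw (star a) y).2
    simp only [star_star] at h2
    have := h2 ((Φ a) w)
    rwa [inner_self_eq_zero] at this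
  constructor
  · ext z
    simp only [ContinuousLinearMap.mul_apply, ContinuousLinearMap.one_apply]
    set u := (Φ a) z - P ((Φ a) z) with hu
    have hPu : P u = 0 := by
      simp only [hu, map_sub]
      rw [show P (P ((Φ a) z)) = (P * P) ((Φ a) z) from rfl, hPidem]
      simp
    have huz : (inner ℂ u ((Φ a) z) : ℂ) = 0 := (cp_inner16 hcp hP1 hPu a z).1
    have : (inner ℂ u u : ℂ) = 0 := by
      rw [hu, inner_sub_right, ← sa_inner16 hPsa, hPu]
      simpa using huz
    rw [inner_self_eq_zero, hu, sub_eq_zero] at this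
    exact this.symm
  · ext z
    simp only [ContinuousLinearMap.mul_apply, ContinuousLinearMap.one_apply]
    have h1 : P (z - P z) = 0 := by
      rw [map_sub, show P (P z) = (P * P) z from rfl, hPidem, sub_self]
    have := hker _ h1
    rw [map_sub, sub_eq_zero] at this
    exact this.symm

end Aux

/-- Lemma `lem-proj-unitary`. If `P` is an orthogonal projection, `S` is
invertible, and `Φ, Ψ ∈ CP^{(P)}` satisfy `Ψ = Ad_S ∘ Φ`, then there is a unitary `U` with
`Ψ = Ad_U ∘ Φ`. -/
theorem stmt16 {A : Type*} [NormedRing A] [StarRing A] [CStarRing A] [NormedAlgebra ℂ A] [StarModule ℂ A] [CompleteSpace A]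
    {H : Type*} [NormedAddCommGroup H] [InnerProductSpace ℂ H] [CompleteSpace H]
    (P : H →L[ℂ] H) (hPsa : IsSelfAdjoint P) (hPidem : P * P = P)
    (S : H →L[ℂ] H) (hS : IsUnit S)
    (Φ Ψ : A →ₗ[ℂ] (H →L[ℂ] H)) (hΦ : Φ ∈ CPP (A := A) P) (hΨ : Ψ ∈ CPP (A := A) P)
    (h : Ψ = (conjAd S).comp Φ) :
    ∃ U : H →L[ℂ] H, U ∈ unitary (H →L[ℂ] H) ∧ Ψ = (conjAd U).comp Φ := by
  obtain ⟨hΦcp, hΦ1⟩ := hΦ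
  obtain ⟨hΨcp, hΨ1⟩ := hΨ
  obtain ⟨u, hu⟩ := hS
  set T : H →L[ℂ] H := ↑u⁻¹ with hT
  have hST : S * T = 1 := by rw [← hu]; exact u.mul_inv
  have hTS : T * S = 1 := by rw [← hu]; exact u.inv_mul
  have hsTS : star T * star S = 1 := by rw [← star_mul, hST, star_one]
  have hsST : star S * star T = 1 := by rw [← star_mul, hTS, star_one]
  have eq1 : star S * P * S = P := by
    have h1 := LinearMap.congr_fun h 1
    rw [hΨ1] at h1
    simp only [LinearMap.comp_apply, hΦ1, conjAd, LinearMap.coe_mk, AddHom.coe_mk] at h1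
    exact h1.symm
  have e1 : P * S = star T * P := by
    calc P * S = (star T * star S) * (P * S) := by rw [hsTS, one_mul]
    _ = star T * (star S * P * S) := by noncomm_ring
    _ = star T * P := by rw [eq1]
  have eq2 : star T * P * T = P := by
    calc star T * P * T = P * S * T := by rw [e1]
    _ = P * (S * T) := by rw [mul_assoc]
    _ = P := by rw [hST, mul_one]
  have e2 : P * T = star S * P := by
    calc P * T = (star S * star T) * (P * T) := by rw [hsST, one_mul]
    _ = star S * (star T * P * T) := by noncomm_ring
    _ = star S * P := by rw [eq2]
  set V : H →L[ℂ] H := P * S with hV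
  have hsV : star V = star S * P := by rw [hV, star_mul, hPsa.star_eq]
  have hsV' : star V = P * T := by rw [hsV, ← e2]
  have hVP : V * P = V := by
    rw [e1, mul_assoc, hPidem]
  have hPV : P * V = V := by rw [hV, ← mul_assoc, hPidem]
  have hsVP : star V * P = star V := by rw [hsV, mul_assoc, hPidem]
  have hPsV : P * star V = star V := by rw [hsV', ← mul_assoc, hPidem]
  have hsVV : star V * V = P := by
    rw [hsV, hV, mul_assoc, ← mul_assoc P P S, hPidem, ← mul_assoc, eq1]
  have hVsV : V * star V = P := by
    rw [hsV', ← mul_assoc, hVP, e1, eq2]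
  set U : H →L[ℂ] H := V + (1 - P) with hU
  have hsU : star U = star V + (1 - P) := by
    rw [hU, star_add, star_sub, star_one, hPsa.star_eq]
  have h1P : (1 - P) * (1 - P) = 1 - P := by noncomm_ring [hPidem]
  have hunit1 : star U * U = 1 := by
    rw [hU, hsU]
    rw [add_mul, mul_add, mul_add]
    rw [hsVV]
    rw [show star V * (1 - P) = star V - star V * P by noncomm_ring, hsVP, sub_self]
    rw [show (1 - P) * V = V - P * V by noncomm_ring, hPV, sub_self]
    rw [h1P]
    noncomm_ring
  have hunit2 : U * star U = 1 := by
    rw [hU, hsU]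
    rw [add_mul, mul_add, mul_add]
    rw [hVsV]
    rw [show V * (1 - P) = V - V * P by noncomm_ring, hVP, sub_self]
    rw [show (1 - P) * star V = star V - P * star V by noncomm_ring, hPsV, sub_self]
    rw [h1P]
    noncomm_ring
  refine ⟨U, Unitary.mem_iff.mpr ⟨hunit1, hunit2⟩, ?_⟩
  refine LinearMap.ext fun a => ?_
  have hsupp := cp_support16 hΦcp hΦ1 hPsa hPidem a
  have hΨa := LinearMap.congr_fun h a
  simp only [LinearMap.comp_apply, conjAd, LinearMap.coe_mk, AddHom.coe_mk] at hΨa ⊢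
  rw [hΨa]
  have hUP2 : star U * P = star V := by
    rw [hsU, add_mul, show (1 - P) * P = P - P * P by noncomm_ring, hPidem, sub_self,
      add_zero, hsVP]
  have hPU2 : P * U = V := by
    rw [hU, mul_add, hPV, show P * (1 - P) = P - P * P by noncomm_ring, hPidem, sub_self,
      add_zero]
  calc star S * Φ a * S = star S * (P * Φ a * P) * S := by rw [hsupp.1, hsupp.2]
    _ = (star S * P) * Φ a * (P * S) := by noncomm_ring
    _ = star V * Φ a * V := by rw [← hsV, ← hV]
    _ = (star U * P) * Φ a * (P * U) := by rw [hUP2, hPU2]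
    _ = star U * (P * Φ a * P) * U := by noncomm_ring
    _ = star U * Φ a * U := by rw [hsupp.1, hsupp.2]


end
end

section
/- Let A be a unital C*-algebra and H a finite-dimensional complex Hilbert space. Then every C*-extreme point of CCP(A,B(H)) is a linear extreme point of CCP(A,B(H)). -/
open scoped ComplexOrder

noncomputable section

section Aux

open scoped InnerProductSpace

variable {H : Type*} [NormedAddCommGroup H] [InnerProductSpace ℂ H] [CompleteSpace H]

lemma aux_starU_inner {U : H →L[ℂ] H} (hU : U ∈ unitary (H →L[ℂ] H)) (w : H) :
    ⟪(star U) w, (star U) w⟫_ℂ = ⟪w, w⟫_ℂ := by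
  rw [ContinuousLinearMap.star_eq_adjoint, ContinuousLinearMap.adjoint_inner_left]
  have h : U * star U = 1 := Unitary.mul_star_self_of_mem hU
  have h2 : U ((ContinuousLinearMap.adjoint U) w) = w := by
    rw [← ContinuousLinearMap.star_eq_adjoint]
    calc U ((star U) w) = (U * star U) w := rfl
      _ = w := by rw [h]; rfl
  rw [h2]

lemma aux_hs {ι : Type*} [Fintype ι] (b : OrthonormalBasis ι ℂ H) (W : H →L[ℂ] H) :
    ∑ i, ⟪W (b i), W (b i)⟫_ℂ = ∑ i, ⟪(star W) (b i), (star W) (b i)⟫_ℂ := by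
  calc ∑ i, ⟪W (b i), W (b i)⟫_ℂ
      = ∑ i, ∑ k, ⟪W (b i), b k⟫_ℂ * ⟪b k, W (b i)⟫_ℂ :=
        Finset.sum_congr rfl fun i _ => (b.sum_inner_mul_inner _ _).symm
    _ = ∑ i, ∑ k, ⟪(star W) (b k), b i⟫_ℂ * ⟪b i, (star W) (b k)⟫_ℂ := by
        refine Finset.sum_congr rfl fun i _ => Finset.sum_congr rfl fun k _ => ?_
        rw [ContinuousLinearMap.star_eq_adjoint, ContinuousLinearMap.adjoint_inner_left,
          ContinuousLinearMap.adjoint_inner_right, mul_comm]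
    _ = ∑ k, ∑ i, ⟪(star W) (b k), b i⟫_ℂ * ⟪b i, (star W) (b k)⟫_ℂ := Finset.sum_comm
    _ = ∑ k, ⟪(star W) (b k), (star W) (b k)⟫_ℂ :=
        Finset.sum_congr rfl fun k _ => b.sum_inner_mul_inner _ _

lemma aux_conj {ι : Type*} [Fintype ι] (b : OrthonormalBasis ι ℂ H) {U : H →L[ℂ] H}
    (hU : U ∈ unitary (H →L[ℂ] H)) (X : H →L[ℂ] H) :
    ∑ i, ⟪(star U * X * U) (b i), (star U * X * U) (b i)⟫_ℂ
      = ∑ i, ⟪X (b i), X (b i)⟫_ℂ := by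
  calc ∑ i, ⟪(star U * X * U) (b i), (star U * X * U) (b i)⟫_ℂ
      = ∑ i, ⟪(star U) ((X * U) (b i)), (star U) ((X * U) (b i))⟫_ℂ := rfl
    _ = ∑ i, ⟪(X * U) (b i), (X * U) (b i)⟫_ℂ :=
        Finset.sum_congr rfl fun i _ => aux_starU_inner hU _
    _ = ∑ i, ⟪(star (X * U)) (b i), (star (X * U)) (b i)⟫_ℂ := aux_hs b (X * U)
    _ = ∑ i, ⟪(star U) ((star X) (b i)), (star U) ((star X) (b i))⟫_ℂ := by
        refine Finset.sum_congr rfl fun i _ => ?_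
        rw [star_mul]; rfl
    _ = ∑ i, ⟪(star X) (b i), (star X) (b i)⟫_ℂ :=
        Finset.sum_congr rfl fun i _ => aux_starU_inner hU _
    _ = ∑ i, ⟪X (b i), X (b i)⟫_ℂ := (aux_hs b X).symm

lemma aux_key_s19 [FiniteDimensional ℂ H] {n : ℕ} (t : Fin n → ℝ) (ht : ∀ j, 0 < t j)
    (hsum : ∑ j, t j = 1) (U : Fin n → (H →L[ℂ] H))
    (hU : ∀ j, U j ∈ unitary (H →L[ℂ] H))
    (X : H →L[ℂ] H) (hX : ∑ j, (t j : ℂ) • (star (U j) * X * U j) = X) :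
    ∀ j, star (U j) * X * U j = X := by
  set b := stdOrthonormalBasis ℂ H with hb
  set Y : Fin n → (H →L[ℂ] H) := fun j => star (U j) * X * U j with hY
  have hv : ∀ v : H, ∑ j, (t j : ℂ) • (Y j v) = X v := by
    intro v
    have := congrArg (fun W : H →L[ℂ] H => W v) hX
    simpa [hY] using this
  have hone : (∑ j, (t j : ℂ)) = 1 := by exact_mod_cast hsum
  have crossL : ∀ v : H, ∑ j, (t j : ℂ) * ⟪Y j v, X v⟫_ℂ = ⟪X v, X v⟫_ℂ := by
    intro v
    calc ∑ j, (t j : ℂ) * ⟪Y j v, X v⟫_ℂ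
        = ∑ j, ⟪(t j : ℂ) • (Y j v), X v⟫_ℂ := by
          refine Finset.sum_congr rfl fun j _ => ?_
          rw [inner_smul_left, Complex.conj_ofReal]
      _ = ⟪∑ j, (t j : ℂ) • (Y j v), X v⟫_ℂ := (sum_inner _ _ _).symm
      _ = ⟪X v, X v⟫_ℂ := by rw [hv v]
  have crossR : ∀ v : H, ∑ j, (t j : ℂ) * ⟪X v, Y j v⟫_ℂ = ⟪X v, X v⟫_ℂ := by
    intro v
    calc ∑ j, (t j : ℂ) * ⟪X v, Y j v⟫_ℂ
        = ∑ j, ⟪X v, (t j : ℂ) • (Y j v)⟫_ℂ :=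
          Finset.sum_congr rfl fun j _ => (inner_smul_right _ _ _).symm
      _ = ⟪X v, ∑ j, (t j : ℂ) • (Y j v)⟫_ℂ := (inner_sum _ _ _).symm
      _ = ⟪X v, X v⟫_ℂ := by rw [hv v]
  have hC : ∀ j, ∑ i, ⟪Y j (b i), Y j (b i)⟫_ℂ = ∑ i, ⟪X (b i), X (b i)⟫_ℂ :=
    fun j => aux_conj b (hU j) X
  have main : ∑ i, ∑ j, (t j : ℂ) * ⟪(Y j - X) (b i), (Y j - X) (b i)⟫_ℂ = 0 := by
    have perv : ∀ v : H,
        ∑ j, (t j : ℂ) * ⟪(Y j - X) v, (Y j - X) v⟫_ℂ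
          = (∑ j, (t j : ℂ) * ⟪Y j v, Y j v⟫_ℂ) - ⟪X v, X v⟫_ℂ := by
      intro v
      have expand : ∀ j, ⟪(Y j - X) v, (Y j - X) v⟫_ℂ
          = ⟪Y j v, Y j v⟫_ℂ - ⟪Y j v, X v⟫_ℂ - ⟪X v, Y j v⟫_ℂ + ⟪X v, X v⟫_ℂ := by
        intro j
        rw [ContinuousLinearMap.sub_apply]
        exact inner_sub_sub_self _ _
      calc ∑ j, (t j : ℂ) * ⟪(Y j - X) v, (Y j - X) v⟫_ℂ
          = ∑ j, ((t j : ℂ) * ⟪Y j v, Y j v⟫_ℂ - (t j : ℂ) * ⟪Y j v, X v⟫_ℂ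
              - (t j : ℂ) * ⟪X v, Y j v⟫_ℂ + (t j : ℂ) * ⟪X v, X v⟫_ℂ) := by
            refine Finset.sum_congr rfl fun j _ => ?_
            rw [expand j]; ring
        _ = (∑ j, (t j : ℂ) * ⟪Y j v, Y j v⟫_ℂ) - (∑ j, (t j : ℂ) * ⟪Y j v, X v⟫_ℂ)
            - (∑ j, (t j : ℂ) * ⟪X v, Y j v⟫_ℂ) + (∑ j, (t j : ℂ)) * ⟪X v, X v⟫_ℂ := by
            rw [Finset.sum_add_distrib, Finset.sum_sub_distrib, Finset.sum_sub_distrib,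
              Finset.sum_mul]
        _ = (∑ j, (t j : ℂ) * ⟪Y j v, Y j v⟫_ℂ) - ⟪X v, X v⟫_ℂ := by
            rw [crossL v, crossR v, hone]; ring
    calc ∑ i, ∑ j, (t j : ℂ) * ⟪(Y j - X) (b i), (Y j - X) (b i)⟫_ℂ
        = ∑ i, ((∑ j, (t j : ℂ) * ⟪Y j (b i), Y j (b i)⟫_ℂ) - ⟪X (b i), X (b i)⟫_ℂ) :=
          Finset.sum_congr rfl fun i _ => perv (b i)
      _ = (∑ j, (t j : ℂ) * ∑ i, ⟪Y j (b i), Y j (b i)⟫_ℂ)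
            - ∑ i, ⟪X (b i), X (b i)⟫_ℂ := by
          rw [Finset.sum_sub_distrib]
          congr 1
          rw [Finset.sum_comm]
          exact Finset.sum_congr rfl fun j _ => (Finset.mul_sum _ _ _).symm
      _ = 0 := by
          have h1 : ∑ j, (t j : ℂ) * ∑ i, ⟪Y j (b i), Y j (b i)⟫_ℂ
              = ∑ j, (t j : ℂ) * ∑ i, ⟪X (b i), X (b i)⟫_ℂ :=
            Finset.sum_congr rfl fun j _ => by rw [hC j]
          rw [h1, ← Finset.sum_mul, hone, one_mul, sub_self]
  have mainR : ∑ i, ∑ j, t j * ‖(Y j - X) (b i)‖ ^ 2 = 0 := by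
    have cast_eq : ((∑ i, ∑ j, t j * ‖(Y j - X) (b i)‖ ^ 2 : ℝ) : ℂ)
        = ∑ i, ∑ j, (t j : ℂ) * ⟪(Y j - X) (b i), (Y j - X) (b i)⟫_ℂ := by
      push_cast
      refine Finset.sum_congr rfl fun i _ => Finset.sum_congr rfl fun j _ => ?_
      rw [inner_self_eq_norm_sq_to_K]
      exact rfl
    have h0 : ((∑ i, ∑ j, t j * ‖(Y j - X) (b i)‖ ^ 2 : ℝ) : ℂ) = 0 := by
      rw [cast_eq, main]
    exact_mod_cast h0
  intro j
  have hinner : ∀ i ∈ Finset.univ, ∑ j, t j * ‖(Y j - X) (b i)‖ ^ 2 = 0 := by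
    rw [← Finset.sum_eq_zero_iff_of_nonneg]
    · exact mainR
    · intro i _
      exact Finset.sum_nonneg fun j _ => mul_nonneg (ht j).le (sq_nonneg _)
  have hterm : ∀ i, t j * ‖(Y j - X) (b i)‖ ^ 2 = 0 := by
    intro i
    have := (Finset.sum_eq_zero_iff_of_nonneg
      (fun k _ => mul_nonneg (ht k).le (sq_nonneg _))).mp
      (hinner i (Finset.mem_univ i)) j (Finset.mem_univ j)
    exact this
  have hbasis : ∀ i, (Y j) (b i) = X (b i) := by
    intro i
    have h1 : ‖(Y j - X) (b i)‖ ^ 2 = 0 := by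
      rcases mul_eq_zero.mp (hterm i) with h | h
      · exact absurd h (ht j).ne'
      · exact h
    have h2 : (Y j - X) (b i) = 0 := by
      rw [← norm_eq_zero]
      exact pow_eq_zero_iff two_ne_zero |>.mp h1
    have h3 : (Y j) (b i) - X (b i) = 0 := by
      rw [← ContinuousLinearMap.sub_apply]; exact h2
    exact sub_eq_zero.mp h3
  have hYX : Y j = X := by
    apply ContinuousLinearMap.coe_injective
    refine b.toBasis.ext fun i => ?_
    simpa [OrthonormalBasis.coe_toBasis] using hbasis i
  exact hYX

end Aux


/-- Corollary `rmk-CCP-Cstar-linear-ext`. If `H` is finite-dimensional, then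
every `C*`-extreme point of `CCP(A,B(H))` is a linear extreme point of `CCP(A,B(H))`. -/
theorem stmt19 {A : Type*} [NormedRing A] [StarRing A] [CStarRing A] [NormedAlgebra ℂ A] [StarModule ℂ A] [CompleteSpace A]
    {H : Type*} [NormedAddCommGroup H] [InnerProductSpace ℂ H] [CompleteSpace H] [FiniteDimensional ℂ H] :
    ∀ Φ : A →ₗ[ℂ] (H →L[ℂ] H),
      IsCstarExtreme (CCPmaps (A := A) (H := H)) Φ →
      IsLinExtreme (CCPmaps (A := A) (H := H)) Φ := by
  intro Φ hΦ
  obtain ⟨hmem, hext⟩ := hΦ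
  refine ⟨hmem, ?_⟩
  intro n t Φs ht hmemΦs hsum heq
  set c : Fin n → ℂ := fun j => ((Real.sqrt (t j) : ℝ) : ℂ) with hc
  have hcne : ∀ j, c j ≠ 0 := by
    intro j
    simp only [hc, ne_eq, Complex.ofReal_eq_zero]
    exact ne_of_gt (Real.sqrt_pos.mpr (ht j).1)
  have hcc : ∀ j, c j * c j = (t j : ℂ) := by
    intro j
    rw [hc, ← Complex.ofReal_mul, Real.mul_self_sqrt (ht j).1.le]
  set T : Fin n → (H →L[ℂ] H) := fun j => c j • 1 with hT
  have hstarT : ∀ j, star (T j) = c j • 1 := by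
    intro j
    rw [hT]
    simp only [star_smul, star_one, hc, Complex.star_def, Complex.conj_ofReal]
  have hTsmul : ∀ (j) (W : H →L[ℂ] H), star (T j) * W * T j = (t j : ℂ) • W := by
    intro j W
    rw [hstarT j, hT]
    rw [smul_mul_assoc, one_mul, mul_smul_comm, mul_one, smul_smul, hcc j]
  have hTu : ∀ j, IsUnit (T j) := by
    intro j
    refine ⟨⟨T j, (c j)⁻¹ • 1, ?_, ?_⟩, rfl⟩
    · rw [hT]
      rw [smul_mul_assoc, one_mul, smul_smul, mul_inv_cancel₀ (hcne j), one_smul]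
    · rw [hT]
      rw [smul_mul_assoc, one_mul, smul_smul, inv_mul_cancel₀ (hcne j), one_smul]
  have hsumT : (∑ j, star (T j) * T j) = 1 := by
    have h1 : ∀ j, star (T j) * T j = (t j : ℂ) • (1 : H →L[ℂ] H) := by
      intro j
      have := hTsmul j 1
      rwa [mul_one] at this
    rw [Finset.sum_congr rfl fun j _ => h1 j, ← Finset.sum_smul]
    have hone : (∑ j, (t j : ℂ)) = 1 := by exact_mod_cast hsum
    rw [hone, one_smul]
  have hdecomp : Φ = ∑ j, (conjAd (T j)).comp (Φs j) := by
    apply LinearMap.ext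
    intro a
    have hL : Φ a = ∑ j, (t j : ℂ) • (Φs j a) := by
      have := congrArg (fun Ψ : A →ₗ[ℂ] (H →L[ℂ] H) => Ψ a) heq
      simpa using this
    have hR : (∑ j, (conjAd (T j)).comp (Φs j)) a = ∑ j, (t j : ℂ) • (Φs j a) := by
      rw [LinearMap.sum_apply]
      refine Finset.sum_congr rfl fun j _ => ?_
      show star (T j) * (Φs j a) * T j = (t j : ℂ) • (Φs j a)
      exact hTsmul j (Φs j a)
    rw [hL, hR]
  have hU := hext n T Φs hTu hmemΦs hsumT hdecomp
  choose U hUmem hUeq using hU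
  intro j
  apply LinearMap.ext
  intro a
  have hXa : ∑ k, (t k : ℂ) • (star (U k) * (Φ a) * U k) = Φ a := by
    have hL : Φ a = ∑ k, (t k : ℂ) • (Φs k a) := by
      have := congrArg (fun Ψ : A →ₗ[ℂ] (H →L[ℂ] H) => Ψ a) heq
      simpa using this
    have h2 : ∀ k, Φs k a = star (U k) * (Φ a) * U k := by
      intro k
      have := congrArg (fun Ψ : A →ₗ[ℂ] (H →L[ℂ] H) => Ψ a) (hUeq k)
      simpa [conjAd] using this
    calc ∑ k, (t k : ℂ) • (star (U k) * (Φ a) * U k)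
        = ∑ k, (t k : ℂ) • (Φs k a) := Finset.sum_congr rfl fun k _ => by rw [← h2 k]
      _ = Φ a := hL.symm
  have hkey := aux_key_s19 t (fun k => (ht k).1) hsum U hUmem (Φ a) hXa j
  have h2 : Φs j a = star (U j) * (Φ a) * U j := by
    have := congrArg (fun Ψ : A →ₗ[ℂ] (H →L[ℂ] H) => Ψ a) (hUeq j)
    simpa [conjAd] using this
  rw [h2, hkey]

end
end
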